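/- arXiv:1304.0444 — 9 statements merged into one kernel-verified Lean document; each statement's English description precedes it below -/
import Mathlib

section
/- If P is a complex polynomial of degree n with all its zeros in the closed unit disk |z| ≤ 1, then for every R ≥ r ≥ 1 and every z with |z| = 1, one has |P(Rz)| ≥ ((R+1)/(r+1))^n · |P(rz)|. -/
open Polynomial Complex ComplexConjugate

lemma key_ineq (R r : ℝ) (hr : 1 ≤ r) (hRr : r ≤ R) (z w : ℂ)
    (hz : ‖z‖ = 1) (hw : ‖w‖ ≤ 1) :
    (R + 1) / (r + 1) * ‖(r : ℂ) * z - w‖ ≤ ‖(R : ℂ) * z - w‖ := by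
  have hr0 : (0:ℝ) < r + 1 := by linarith
  have h1 : 0 ≤ (R + 1) / (r + 1) * ‖(r : ℂ) * z - w‖ :=
    mul_nonneg (div_nonneg (by linarith) hr0.le) (norm_nonneg _)
  have h2 : 0 ≤ ‖(R : ℂ) * z - w‖ := norm_nonneg _
  rw [← pow_le_pow_iff_left₀ h1 h2 (two_ne_zero), mul_pow, div_pow]
  rw [Complex.sq_norm, Complex.sq_norm]
  set t : ℝ := (z * conj w).re with ht
  set s := Complex.normSq w with hs
  have hnz : Complex.normSq z = 1 := by
    have := Complex.sq_norm z; rw [hz] at this; nlinarith [this]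
  have key : ∀ a : ℝ, Complex.normSq ((a:ℂ) * z - w) = a^2 - 2*a*t + s := by
    intro a
    rw [Complex.normSq_sub, Complex.normSq_mul, Complex.normSq_ofReal, hnz,
      show ((a:ℂ)*z*conj w) = (a:ℂ)*(z*conj w) from by ring]
    rw [show ((a:ℂ)*(z * conj w)).re = a * (z*conj w).re from Complex.re_ofReal_mul _ _]
    ring
  rw [key, key]
  have hs0 : 0 ≤ s := Complex.normSq_nonneg w
  have hs1 : s ≤ 1 := by
    have := Complex.sq_norm w; nlinarith [norm_nonneg w]
  have htb : t^2 ≤ s := by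
    have h := Complex.abs_re_le_norm (z * conj w)
    have habs : ‖z * conj w‖ = ‖w‖ := by
      simp [map_mul, hz]
    rw [habs] at h
    have h2' : t^2 ≤ (‖w‖)^2 := by
      nlinarith [abs_nonneg t, _root_.sq_abs t]
    have hh : (‖w‖)^2 = s := Complex.sq_norm w
    nlinarith
  set u := Real.sqrt s with hu
  have hu2 : u^2 = s := Real.sq_sqrt hs0
  have hu0 : 0 ≤ u := Real.sqrt_nonneg s
  have hu1 : u ≤ 1 := by nlinarith
  have htlb : -u ≤ t := by nlinarith [_root_.sq_abs t, abs_nonneg t, neg_abs_le t]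
  have hrR1 : 1 ≤ r * R := by nlinarith
  have f1 : 0 ≤ 2*(R - r) * (r*R - 1) * (t + u) := by
    apply mul_nonneg (mul_nonneg (by linarith) (by linarith)); linarith
  have f2 : 0 ≤ (R - r) * (1 - u) * ((r+1)*(R+u) + (R+1)*(r+u)) := by
    apply mul_nonneg (mul_nonneg (by linarith) (by linarith)); nlinarith
  rw [div_mul_eq_mul_div, div_le_iff₀ (by positivity)]
  nlinarith [f1, f2, hu2]
lemma prod_lemma (c : ℝ) (hc : 0 ≤ c) (f g : ℂ → ℝ) (hf : ∀ w, 0 ≤ f w)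
    (s : Multiset ℂ) (h : ∀ w ∈ s, c * f w ≤ g w) :
    c ^ Multiset.card s * (s.map f).prod ≤ (s.map g).prod := by
  induction s using Multiset.induction with
  | empty => simp
  | cons a s ih =>
    simp only [Multiset.map_cons, Multiset.prod_cons, Multiset.card_cons]
    have ha : c * f a ≤ g a := h a (Multiset.mem_cons_self a s)
    have ih' := ih (fun w hw => h w (Multiset.mem_cons_of_mem hw))
    have h1 : 0 ≤ c ^ Multiset.card s * (s.map f).prod := by
      apply mul_nonneg (pow_nonneg hc _)
      exact Multiset.prod_nonneg (by simpa using fun w _ => hf w)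
    calc c ^ (Multiset.card s + 1) * (f a * (s.map f).prod)
        = (c * f a) * (c ^ Multiset.card s * (s.map f).prod) := by ring
      _ ≤ g a * (s.map g).prod := by
          apply mul_le_mul ha ih' h1
          exact le_trans (mul_nonneg hc (hf a)) ha

theorem stmt_0 (P : Polynomial ℂ) (n : ℕ) (hdeg : P.natDegree = n)
    (hroots : ∀ w : ℂ, P.eval w = 0 → ‖w‖ ≤ 1)
    (R r : ℝ) (hr : 1 ≤ r) (hRr : r ≤ R) (z : ℂ) (hz : ‖z‖ = 1) :
    ((R + 1) / (r + 1)) ^ n * ‖P.eval ((r : ℂ) * z)‖ ≤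
      ‖P.eval ((R : ℂ) * z)‖ := by
  by_cases hP : P = 0
  · simp [hP]
  have hsplit : P.Splits := IsAlgClosed.splits P
  have heq := hsplit.eq_prod_roots
  have hcard : Multiset.card P.roots = n := by
    rw [← hdeg]; exact (hsplit.natDegree_eq_card_roots).symm
  have habs : ∀ x : ℂ, ‖P.eval x‖ =
      ‖P.leadingCoeff‖ * (P.roots.map (fun w => ‖x - w‖)).prod := by
    intro x
    conv_lhs => rw [heq]
    rw [Polynomial.eval_mul, Polynomial.eval_C, norm_mul, Polynomial.eval_multiset_prod,
      Multiset.map_map]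
    congr 1
    rw [show (eval x ∘ fun a : ℂ => X - C a) = fun a : ℂ => x - a from funext (by simp)]
    exact (map_multiset_prod (normHom (α := ℂ)) _).trans (by rw [Multiset.map_map]; rfl)
  rw [habs, habs, mul_left_comm]
  apply mul_le_mul_of_nonneg_left _ (norm_nonneg _)
  rw [← hcard]
  apply prod_lemma _ (div_nonneg (by linarith) (by linarith)) _ _ (fun w => norm_nonneg _)
  intro w hw
  exact key_ineq R r hr hRr z w hz (hroots w ((Polynomial.isRoot_of_mem_roots hw)))
end

section
/- If A, B, C are non-negative real numbers with B + C ≤ A, then for every real number γ, |(A − C)·e^{iγ} + (B + C)| ≤ |A·e^{iγ} + B|. -/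
open Complex

theorem stmt_1 (A B C : ℝ) (hA : 0 ≤ A) (hB : 0 ≤ B) (hC : 0 ≤ C)
    (hBC : B + C ≤ A) (γ : ℝ) :
    ‖((A : ℂ) - C) * Complex.exp (γ * Complex.I) + ((B : ℂ) + C)‖ ≤
      ‖(A : ℂ) * Complex.exp (γ * Complex.I) + B‖ := by
  rw [Complex.norm_def, Complex.norm_def]
  apply Real.sqrt_le_sqrt
  rw [Complex.exp_mul_I]
  simp [Complex.normSq_apply, Complex.cos_ofReal_re, Complex.sin_ofReal_re, Complex.cos_ofReal_im, Complex.sin_ofReal_im]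
  have h1 := Real.sin_sq_add_cos_sq γ
  have h2 := Real.cos_le_one γ
  have h3 := Real.neg_one_le_cos γ
  ring_nf
  have e1 : A * C * (Real.sin γ ^ 2 + Real.cos γ ^ 2) = A * C := by rw [h1]; ring
  have e2 : C ^ 2 * (Real.sin γ ^ 2 + Real.cos γ ^ 2) = C ^ 2 := by rw [h1]; ring
  have e3 : A ^ 2 * (Real.sin γ ^ 2 + Real.cos γ ^ 2) = A ^ 2 := by rw [h1]; ring
  nlinarith [mul_nonneg (mul_nonneg hC (by linarith : (0:ℝ) ≤ A - B - C)) (by linarith : (0:ℝ) ≤ 1 - Real.cos γ), e1, e2, e3]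
end

section
/- Let f be a complex polynomial of degree n all of whose zeros lie in the closed unit disk, with at least one zero in the open unit disk. Then for every R > r ≥ 1 and every θ ∈ [0, 2π), |f(Re^{iθ})| > ((R+1)/(r+1))^n · |f(re^{iθ})|. -/
open Polynomial Complex

private lemma absSq (c : ℝ) (z a : ℂ) (hz : ‖z‖ = 1) :
    (‖(c:ℂ) * z - a‖)^2 =
      c^2 + (‖a‖)^2 - 2*c*((z * (starRingEnd ℂ) a).re) := by
  rw [Complex.sq_norm, Complex.normSq_sub, ← Complex.sq_norm ((c:ℂ)*z)]
  have h : ((c:ℂ) * z * (starRingEnd ℂ) a) = (c:ℂ) * (z * (starRingEnd ℂ) a) := by ring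
  rw [h, Complex.re_ofReal_mul, norm_mul, Complex.norm_real, Real.norm_eq_abs, hz,
    ← Complex.sq_norm a]
  linarith [_root_.sq_abs c]

private lemma key_sq {R r : ℝ} (hr : 1 ≤ r) (hRr : r < R) {z a : ℂ}
    (hz : ‖z‖ = 1) (ha : ‖a‖ ≤ 1) :
    ((R+1) * ‖(r:ℂ) * z - a‖)^2 ≤ ((r+1) * ‖(R:ℂ) * z - a‖)^2 := by
  set s := ‖a‖ with hs
  set t := (z * (starRingEnd ℂ) a).re with ht
  have hs0 : 0 ≤ s := norm_nonneg a
  have htb : |t| ≤ s := by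
    calc |t| ≤ ‖z * (starRingEnd ℂ) a‖ := Complex.abs_re_le_norm _
    _ = s := by rw [norm_mul, Complex.norm_conj, hz, one_mul]
  have ht1 : -s ≤ t := neg_le_of_abs_le htb
  have ht2 : t ≤ s := le_of_abs_le htb
  have e1 := absSq r z a hz
  have e2 := absSq R z a hz
  rw [mul_pow, mul_pow, e1, e2, ← hs, ← ht]
  have hkey : (r+1)^2*(R^2+s^2-2*R*t) - (R+1)^2*(r^2+s^2-2*r*t)
      = (R-r)*((1-s)*((1+s)*(R+r+2)+2*(R*r-1)) + 2*(R*r-1)*(t+s)) := by ring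
  have hRr1 : (1:ℝ) ≤ R*r := by nlinarith
  nlinarith [mul_nonneg (mul_nonneg (sub_nonneg.2 hRr.le) (sub_nonneg.2 ha))
      (by nlinarith : (0:ℝ) ≤ (1+s)*(R+r+2)+2*(R*r-1)),
    mul_nonneg (mul_nonneg (sub_nonneg.2 hRr.le) (by linarith : (0:ℝ) ≤ 2*(R*r-1)))
      (by linarith : (0:ℝ) ≤ t+s)]

private lemma key_le {R r : ℝ} (hr : 1 ≤ r) (hRr : r < R) {z a : ℂ}
    (hz : ‖z‖ = 1) (ha : ‖a‖ ≤ 1) :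
    (R+1)/(r+1) * ‖(r:ℂ) * z - a‖ ≤ ‖(R:ℂ) * z - a‖ := by
  rw [div_mul_eq_mul_div, div_le_iff₀ (by linarith)]
  have h := key_sq hr hRr hz ha
  have h1 : 0 ≤ (R+1) * ‖(r:ℂ) * z - a‖ :=
    mul_nonneg (by linarith) (norm_nonneg _)
  have h2 : 0 ≤ (r+1) * ‖(R:ℂ) * z - a‖ :=
    mul_nonneg (by linarith) (norm_nonneg _)
  nlinarith
  
private lemma key_lt {R r : ℝ} (hr : 1 ≤ r) (hRr : r < R) {z a : ℂ}
    (hz : ‖z‖ = 1) (ha : ‖a‖ < 1) :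
    (R+1)/(r+1) * ‖(r:ℂ) * z - a‖ < ‖(R:ℂ) * z - a‖ := by
  rw [div_mul_eq_mul_div, div_lt_iff₀ (by linarith)]
  -- strict squared inequality
  set s := ‖a‖ with hs
  set t := (z * (starRingEnd ℂ) a).re with ht
  have hs0 : 0 ≤ s := norm_nonneg a
  have htb : |t| ≤ s := by
    calc |t| ≤ ‖z * (starRingEnd ℂ) a‖ := Complex.abs_re_le_norm _
    _ = s := by rw [norm_mul, Complex.norm_conj, hz, one_mul]
  have ht1 : -s ≤ t := neg_le_of_abs_le htb
  have e1 := absSq r z a hz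
  have e2 := absSq R z a hz
  have hRr1 : (1:ℝ) ≤ R*r := by nlinarith
  have hsq : ((R+1) * ‖(r:ℂ) * z - a‖)^2
      < ((r+1) * ‖(R:ℂ) * z - a‖)^2 := by
    rw [mul_pow, mul_pow, e1, e2, ← hs, ← ht]
    have hb1 : (0:ℝ) < (1+s)*(R+r+2) := mul_pos (by linarith) (by linarith)
    have hA : (0:ℝ) < (1-s)*((1+s)*(R+r+2)+2*(R*r-1)) := mul_pos (by linarith) (by linarith)
    have hB : (0:ℝ) ≤ 2*(R*r-1)*(t+s) := mul_nonneg (by linarith) (by linarith)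
    nlinarith [mul_pos (sub_pos.2 hRr) (by linarith : (0:ℝ) <
        (1-s)*((1+s)*(R+r+2)+2*(R*r-1)) + 2*(R*r-1)*(t+s))]
  have h1 : 0 ≤ (R+1) * ‖(r:ℂ) * z - a‖ :=
    mul_nonneg (by linarith) (norm_nonneg _)
  have h2 : 0 ≤ (r+1) * ‖(R:ℂ) * z - a‖ :=
    mul_nonneg (by linarith) (norm_nonneg _)
  nlinarith

private lemma prod_map_le (s : Multiset ℂ) (g h : ℂ → ℝ)
    (h0 : ∀ a ∈ s, 0 ≤ g a) (hgh : ∀ a ∈ s, g a ≤ h a) :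
    (s.map g).prod ≤ (s.map h).prod := by
  induction s using Multiset.induction with
  | empty => simp
  | cons a s ih =>
    simp only [Multiset.map_cons, Multiset.prod_cons]
    have hg0 : ∀ b ∈ s, 0 ≤ g b := fun b hb => h0 b (Multiset.mem_cons_of_mem hb)
    have hp0 : 0 ≤ (s.map g).prod := Multiset.prod_nonneg (by
      intro x hx; obtain ⟨b, hb, rfl⟩ := Multiset.mem_map.mp hx; exact hg0 b hb)
    exact mul_le_mul (hgh a (Multiset.mem_cons_self a s))
      (ih hg0 (fun b hb => hgh b (Multiset.mem_cons_of_mem hb))) hp0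
      (le_trans (h0 a (Multiset.mem_cons_self a s)) (hgh a (Multiset.mem_cons_self a s)))

theorem stmt_3 (f : Polynomial ℂ) (n : ℕ) (hdeg : f.natDegree = n)
    (hroots : ∀ w : ℂ, f.eval w = 0 → ‖w‖ ≤ 1)
    (hinner : ∃ w : ℂ, f.eval w = 0 ∧ ‖w‖ < 1)
    (R r : ℝ) (hr : 1 ≤ r) (hRr : r < R) (θ : ℝ) (hθ0 : 0 ≤ θ) (hθ : θ < 2 * Real.pi) :
    ((R + 1) / (r + 1)) ^ n * ‖f.eval ((r : ℂ) * Complex.exp (θ * Complex.I))‖ <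
      ‖f.eval ((R : ℂ) * Complex.exp (θ * Complex.I))‖ := by
  set z : ℂ := Complex.exp (θ * Complex.I) with hzdef
  have hz : ‖z‖ = 1 := Complex.norm_exp_ofReal_mul_I θ
  have hf0 : f ≠ 0 := by
    intro h
    have := hroots 2 (by simp [h])
    rw [Complex.norm_two] at this
    norm_num at this
  have hsplits : Splits f := IsAlgClosed.splits f
  have hfact := hsplits.eq_prod_roots
  have hcard : f.roots.card = n := by rw [← hdeg]; exact splits_iff_card_roots.mp hsplits
  obtain ⟨w, hw, hw1⟩ := hinner
  have hwmem : w ∈ f.roots := mem_roots'.mpr ⟨hf0, hw⟩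
  obtain ⟨s, hs⟩ := Multiset.exists_cons_of_mem hwmem
  have heval : ∀ x : ℂ, ‖f.eval x‖ =
      ‖f.leadingCoeff‖ * ((f.roots.map fun a => ‖x - a‖).prod) := by
    intro x
    have hnp : ∀ m : Multiset ℂ, ‖m.prod‖ = (m.map (‖·‖)).prod :=
      fun m => map_multiset_prod (normHom : ℂ →*₀ ℝ) m
    conv_lhs => rw [hfact]
    rw [eval_mul, eval_C, norm_mul, eval_multiset_prod, Multiset.map_map,
      hnp, Multiset.map_map]
    congr 1
    congr 1
    apply Multiset.map_congr rfl
    intro a _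
    simp
  have hL : 0 < ‖f.leadingCoeff‖ :=
    norm_pos_iff.mpr (leadingCoeff_ne_zero.mpr hf0)
  have hroot_le : ∀ a ∈ s, ‖a‖ ≤ 1 := by
    intro a ha
    exact hroots a (isRoot_of_mem_roots (hs ▸ Multiset.mem_cons_of_mem ha))
  set c : ℝ := (R + 1) / (r + 1) with hcdef
  have hc0 : 0 ≤ c := div_nonneg (by linarith) (by linarith)
  set g1 : ℂ → ℝ := fun a => ‖(r:ℂ) * z - a‖ with hg1
  set g2 : ℂ → ℝ := fun a => ‖(R:ℂ) * z - a‖ with hg2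
  have hP : ((s.map fun a => c * g1 a).prod) ≤ (s.map g2).prod := by
    apply prod_map_le
    · intro a _; exact mul_nonneg hc0 (norm_nonneg _)
    · intro a ha; exact key_le hr hRr hz (hroot_le a ha)
  have hP' : ((s.map fun a => c * g1 a).prod) = c ^ s.card * (s.map g1).prod := by
    rw [Multiset.prod_map_mul (f := fun _ => c) (g := g1)]
    congr 1
    rw [Multiset.map_const', Multiset.prod_replicate]
  have hQpos : 0 < (s.map g2).prod := by
    apply Multiset.prod_pos
    intro x hx
    obtain ⟨a, ha, rfl⟩ := Multiset.mem_map.mp hx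
    apply norm_pos_iff.mpr
    intro h
    have : (R:ℂ) * z = a := sub_eq_zero.mp h
    have habs : ‖a‖ = R := by rw [← this, norm_mul, hz, Complex.norm_real, Real.norm_eq_abs,
      mul_one, abs_of_pos (by linarith)]
    have := hroot_le a ha
    linarith
  have hwlt : c * g1 w < g2 w := key_lt hr hRr hz hw1
  have hPrn : 0 ≤ (s.map g1).prod := Multiset.prod_nonneg (by
    intro x hx; obtain ⟨a, _, rfl⟩ := Multiset.mem_map.mp hx; exact norm_nonneg _)
  have hn : n = s.card + 1 := by rw [← hcard, hs, Multiset.card_cons]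
  rw [heval ((r:ℂ) * z), heval ((R:ℂ) * z), hs, hn]
  simp only [Multiset.map_cons, Multiset.prod_cons]
  have chain : (c * g1 w) * (c ^ s.card * (s.map g1).prod) < g2 w * (s.map g2).prod := by
    calc (c * g1 w) * (c ^ s.card * (s.map g1).prod)
        = (c * g1 w) * ((s.map fun a => c * g1 a).prod) := by rw [hP']
      _ ≤ (c * g1 w) * (s.map g2).prod :=
          mul_le_mul_of_nonneg_left hP (mul_nonneg hc0 (norm_nonneg _))
      _ < g2 w * (s.map g2).prod := mul_lt_mul_of_pos_right hwlt hQpos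
  calc c ^ (s.card + 1) * (‖f.leadingCoeff‖ * (g1 w * (s.map g1).prod))
      = ‖f.leadingCoeff‖ * ((c * g1 w) * (c ^ s.card * (s.map g1).prod)) := by
        ring
    _ < ‖f.leadingCoeff‖ * (g2 w * (s.map g2).prod) :=
        mul_lt_mul_of_pos_left chain hL
end

section
/- Let P be a complex polynomial of degree n with no zeros in the open unit disk, and let m = min_{|z|=1} |P(z)|. Then for every complex λ with |λ| < 1, the polynomial P(z) + λm has no zeros in the open unit disk. -/
open Polynomial Complex

theorem stmt_7 (P : Polynomial ℂ) (n : ℕ) (hdeg : P.natDegree = n)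
    (hnz : ∀ z : ℂ, ‖z‖ < 1 → P.eval z ≠ 0)
    (m : ℝ)
    (hm : IsLeast ((fun z : ℂ => ‖P.eval z‖) '' {z : ℂ | ‖z‖ = 1}) m)
    (lam : ℂ) (hlam : ‖lam‖ < 1) :
    ∀ z : ℂ, ‖z‖ < 1 → P.eval z + lam * m ≠ 0 := by
  intro z hz hzero
  have hm0 : 0 ≤ m := by
    obtain ⟨w, hw, hwm⟩ := hm.1
    exact hwm ▸ norm_nonneg _
  rcases eq_or_lt_of_le hm0 with hm0' | hmpos
  · apply hnz z hz
    have hmc : (m : ℂ) = 0 := by exact_mod_cast hm0'.symm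
    rwa [hmc, mul_zero, add_zero] at hzero
  · have hdiff : DiffContOnCl ℂ (fun w => (P.eval w)⁻¹) (Metric.ball (0:ℂ) 1) := by
      constructor
      · apply DifferentiableOn.inv
        · exact (P.differentiable).differentiableOn
        · intro w hw
          exact hnz w (by simpa using hw)
      · rw [closure_ball (0:ℂ) one_ne_zero]
        apply ContinuousOn.inv₀
        · exact (P.continuous).continuousOn
        · intro w hw
          rcases lt_or_eq_of_le (by simpa using hw : ‖w‖ ≤ 1) with h | h
          · exact hnz w h
          · intro h0
            have h2 := hm.2 (Set.mem_image_of_mem _ h)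
            simp only [h0, norm_zero] at h2
            linarith
    have hfr : ∀ w ∈ frontier (Metric.ball (0:ℂ) 1), ‖(P.eval w)⁻¹‖ ≤ m⁻¹ := by
      rw [frontier_ball (0:ℂ) one_ne_zero]
      intro w hw
      have hw' : ‖w‖ = 1 := by simpa using hw
      have hmw := hm.2 ⟨w, hw', rfl⟩
      rw [norm_inv]
      exact inv_anti₀ hmpos hmw
    have hclo : z ∈ closure (Metric.ball (0:ℂ) 1) :=
      subset_closure (by simpa using hz)
    have hle := Complex.norm_le_of_forall_mem_frontier_norm_le Metric.isBounded_ball hdiff hfr hclo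
    rw [norm_inv] at hle
    have hPz : m ≤ ‖P.eval z‖ := by
      have habs : 0 < ‖P.eval z‖ := by
        simpa using (hnz z hz)
      rwa [inv_le_inv₀ habs hmpos] at hle
    have hPeq : ‖P.eval z‖ = ‖lam‖ * m := by
      have : P.eval z = -(lam * m) := by
        linear_combination hzero
      rw [this, norm_neg, norm_mul]
      simp [abs_of_nonneg hm0]
    rw [hPeq] at hPz
    nlinarith
end

section
/- Let P be a complex polynomial of degree n with all zeros in the closed unit disk, and let m = min_{|z|=1} |P(z)|. Then for every complex λ with |λ| < 1, the polynomial g(z) = P(z) − λ·m·z^n has all its zeros in the closed unit disk. -/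
open Polynomial Complex

lemma rev_eval {P : Polynomial ℂ} {z : ℂ} (hz : z ≠ 0) :
    (Polynomial.reverse P).eval z⁻¹ * z ^ P.natDegree = P.eval z := by
  letI := invertibleOfNonzero hz
  have := Polynomial.eval₂_reverse_mul_pow (RingHom.id ℂ) z P
  rwa [invOf_eq_inv, eval₂_eq_eval_map, eval₂_eq_eval_map, Polynomial.map_id,
    Polynomial.map_id] at this

theorem stmt_8 (P : Polynomial ℂ) (n : ℕ) (hn : 1 ≤ n) (hdeg : P.natDegree = n)
    (hroots : ∀ w : ℂ, P.eval w = 0 → ‖w‖ ≤ 1)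
    (m : ℝ)
    (hm : IsLeast ((fun z : ℂ => ‖P.eval z‖) '' {z : ℂ | ‖z‖ = 1}) m)
    (lam : ℂ) (hlam : ‖lam‖ < 1) :
    ∀ z : ℂ, P.eval z - lam * m * z ^ n = 0 → ‖z‖ ≤ 1 := by
  intro z hgz
  by_contra hz1
  push_neg at hz1
  have hz0 : z ≠ 0 := by
    intro h; rw [h] at hz1; simp at hz1; linarith
  -- m ≥ 0, and m ≤ |P(w)| for all |w| = 1
  obtain ⟨⟨z₀, hz₀, hz₀m⟩, hlb⟩ := hm
  have hm0 : 0 ≤ m := hz₀m ▸ (norm_nonneg _)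
  have hmle : ∀ w : ℂ, ‖w‖ = 1 → m ≤ ‖P.eval w‖ := fun w hw =>
    hlb ⟨w, hw, rfl⟩
  -- case m = 0
  rcases eq_or_lt_of_le hm0 with hm0' | hmpos
  · have : P.eval z = 0 := by
      have : (lam : ℂ) * m * z ^ n = 0 := by rw [← hm0']; simp
      rw [this, sub_zero] at hgz; exact hgz
    exact absurd (hroots z this) (not_le.mpr hz1)
  -- m > 0 : P has no zeros on the closed unit disk boundary or outside
  set Q := Polynomial.reverse P with hQ
  have hPne : P ≠ 0 := fun h => by simp [h, hdeg.symm] at hn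
  -- Q has no zeros on closed unit ball
  have hQne : ∀ u : ℂ, ‖u‖ ≤ 1 → Q.eval u ≠ 0 := by
    intro u hu hQu
    rcases eq_or_ne u 0 with rfl | hu0
    · rw [show Q.eval 0 = Q.coeff 0 from by simp [Polynomial.eval_zero, Polynomial.coeff_zero_eq_eval_zero],
        hQ, Polynomial.coeff_zero_reverse] at hQu
      exact Polynomial.leadingCoeff_ne_zero.mpr hPne hQu
    · have huinv : (u⁻¹)⁻¹ = u := inv_inv u
      have := rev_eval (P := P) (z := u⁻¹) (inv_ne_zero hu0)
      rw [huinv] at this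
      have hPuinv : P.eval u⁻¹ = 0 := by
        rw [← this, hQu, zero_mul]
      have h1 : ‖u⁻¹‖ ≤ 1 := hroots _ hPuinv
      have h2 : ‖u⁻¹‖ = ‖u‖⁻¹ := norm_inv u
      have hu1 : ‖u‖ = 1 := by
        have hups : 0 < ‖u‖ := norm_pos_iff.mpr hu0
        rw [h2] at h1
        have : 1 ≤ ‖u‖ := by
          rw [inv_le_one_iff₀] at h1
          rcases h1 with h | h
          · linarith
          · exact h
        linarith [hu]
      have : m ≤ ‖P.eval u⁻¹‖ := hmle _ (by rw [h2, hu1]; norm_num)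
      rw [hPuinv] at this; simp at this; linarith
  -- max modulus principle for (Q.eval)⁻¹ on unit ball
  have key : ∀ u : ℂ, ‖u‖ ≤ 1 → m ≤ ‖Q.eval u‖ := by
    intro u hu
    have hball : u ∈ closure (Metric.ball (0 : ℂ) 1) := by
      rw [closure_ball (0 : ℂ) one_ne_zero]
      simpa [Complex.dist_eq] using hu
    have hdiff : DiffContOnCl ℂ (fun w => (Q.eval w)⁻¹) (Metric.ball (0 : ℂ) 1) := by
      apply DifferentiableOn.diffContOnCl
      apply DifferentiableOn.inv
      · exact (Q.differentiable.differentiableOn)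
      · intro w hw
        rw [closure_ball (0 : ℂ) one_ne_zero] at hw
        exact hQne w (by simpa [Complex.dist_eq] using hw)
    have hfr : ∀ w ∈ frontier (Metric.ball (0 : ℂ) 1), ‖(Q.eval w)⁻¹‖ ≤ m⁻¹ := by
      intro w hw
      rw [frontier_ball (0 : ℂ) one_ne_zero] at hw
      have hw1 : ‖w‖ = 1 := by simpa [Complex.dist_eq] using hw
      have hw0 : w ≠ 0 := by intro h; rw [h] at hw1; simp at hw1
      have hrel := rev_eval (P := P) (z := w⁻¹) (inv_ne_zero hw0)
      rw [inv_inv] at hrel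
      have hwinv1 : ‖w⁻¹‖ = 1 := by rw [norm_inv, hw1]; norm_num
      have : ‖Q.eval w‖ = ‖P.eval w⁻¹‖ := by
        rw [← hrel, norm_mul, norm_pow, hwinv1, one_pow, mul_one]
      have hmw : m ≤ ‖Q.eval w‖ := this ▸ hmle _ hwinv1
      rw [norm_inv]
      exact inv_anti₀ hmpos hmw
    have := Complex.norm_le_of_forall_mem_frontier_norm_le Metric.isBounded_ball hdiff hfr hball
    rw [norm_inv] at this
    have hQu0 : 0 < ‖Q.eval u‖ := norm_pos_iff.mpr (hQne u hu)
    rw [inv_le_inv₀ hQu0 hmpos] at this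
    exact this
  -- apply at u = z⁻¹
  have huz : ‖z⁻¹‖ ≤ 1 := by
    rw [norm_inv]
    exact inv_le_one_of_one_le₀ (le_of_lt hz1)
  have hkey := key z⁻¹ huz
  have hrel := rev_eval (P := P) (z := z) hz0
  rw [hdeg] at hrel
  have habs : ‖P.eval z‖ = ‖Q.eval z⁻¹‖ * ‖z‖ ^ n := by
    rw [← hrel, norm_mul, norm_pow]
  have hzn : (0:ℝ) < ‖z‖ ^ n := pow_pos (by linarith) n
  have hlow : m * ‖z‖ ^ n ≤ ‖P.eval z‖ := by
    rw [habs]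
    exact mul_le_mul_of_nonneg_right hkey (le_of_lt hzn)
  -- but g z = 0 gives |P z| = |lam| * m * |z|^n < m * |z|^n
  have hPz : P.eval z = lam * m * z ^ n := sub_eq_zero.mp hgz
  have habs2 : ‖P.eval z‖ = ‖lam‖ * m * ‖z‖ ^ n := by
    rw [hPz, norm_mul, norm_mul, norm_pow, Complex.norm_of_nonneg hm0]
  have : ‖lam‖ * m * ‖z‖ ^ n < m * ‖z‖ ^ n := by
    have : ‖lam‖ * m < 1 * m := by
      exact mul_lt_mul_of_pos_right hlam hmpos
    nlinarith
  rw [habs2] at hlow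
  linarith
end

section
/- Let P be a complex polynomial of degree n with all zeros in the open unit disk, and m = min_{|z|=1} |P(z)|. Then m·|z|^n ≤ |P(z)| for all |z| ≥ 1. -/
open Polynomial Complex Metric

lemma key_eval (P : Polynomial ℂ) {z : ℂ} (hz : z ≠ 0) :
    (P.reverse).eval z⁻¹ * z ^ P.natDegree = P.eval z := by
  have : Invertible z := invertibleOfNonzero hz
  have h := Polynomial.eval₂_reverse_mul_pow (RingHom.id ℂ) z P
  rw [invOf_eq_inv] at h
  exact h

theorem stmt_9 (P : Polynomial ℂ) (n : ℕ) (hdeg : P.natDegree = n)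
    (hroots : ∀ w : ℂ, P.eval w = 0 → ‖w‖ < 1)
    (m : ℝ)
    (hm : IsLeast ((fun z : ℂ => ‖P.eval z‖) '' {z : ℂ | ‖z‖ = 1}) m) :
    ∀ z : ℂ, 1 ≤ ‖z‖ → m * ‖z‖ ^ n ≤ ‖P.eval z‖ := by
  intro z hz1
  obtain ⟨⟨w₀, hw₀, hmw₀⟩, hlb⟩ := hm
  have hm0 : 0 ≤ m := by rw [← hmw₀]; exact norm_nonneg _
  rcases eq_or_lt_of_le hm0 with hm0' | hmpos
  · calc m * ‖z‖ ^ n = 0 := by rw [← hm0']; ring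
    _ ≤ _ := norm_nonneg _
  have hP : P ≠ 0 := by
    rintro rfl
    have h1 := hlb ⟨1, by simp, rfl⟩
    simp at h1; linarith
  set Q := P.reverse with hQ
  have hQne : ∀ u : ℂ, ‖u‖ ≤ 1 → Q.eval u ≠ 0 := by
    intro u hu hQu
    rcases eq_or_ne u 0 with rfl | hu0
    · rw [hQ] at hQu
      rw [← Polynomial.coeff_zero_eq_eval_zero, Polynomial.coeff_zero_reverse] at hQu
      exact hP (Polynomial.leadingCoeff_eq_zero.mp hQu)
    · have hzinv : (u⁻¹ : ℂ) ≠ 0 := inv_ne_zero hu0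
      have h := key_eval P hzinv
      rw [inv_inv, hQu, zero_mul] at h
      have habs := hroots _ h.symm
      rw [norm_inv] at habs
      have hu0' : 0 < ‖u‖ := norm_pos_iff.mpr hu0
      have : (1:ℝ) < ‖u‖ := by
        rw [inv_lt_one_iff₀] at habs
        rcases habs with h' | h' <;> [linarith; exact h']
      linarith
  -- boundary bound : |Q u| ≥ m on |u| = 1
  have hbd : ∀ u : ℂ, ‖u‖ = 1 → m ≤ ‖Q.eval u‖ := by
    intro u hu
    have hu0 : u ≠ 0 := by intro h; rw [h] at hu; simp at hu
    have hzinv : (u⁻¹ : ℂ) ≠ 0 := inv_ne_zero hu0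
    have h := key_eval P hzinv
    rw [inv_inv] at h
    have hlow := hlb ⟨u⁻¹, by simp [Set.mem_setOf_eq, norm_inv, hu], rfl⟩
    have habs : ‖Q.eval u‖ * ‖u⁻¹‖ ^ P.natDegree
        = ‖P.eval u⁻¹‖ := by rw [← h]; simp [map_mul, map_pow, hQ]
    rw [norm_inv, hu] at habs
    simp at habs
    simpa [habs] using hlow
  -- minimum modulus: |Q u| ≥ m on |u| ≤ 1
  have hmin : ∀ u : ℂ, ‖u‖ ≤ 1 → m ≤ ‖Q.eval u‖ := by
    intro u hu
    have hcont : ContinuousOn (fun u : ℂ => (Q.eval u)⁻¹) (closedBall 0 1) := by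
      apply ContinuousOn.inv₀ (Q.continuous_aeval.continuousOn)
      intro x hx
      exact hQne x (by simpa [Complex.dist_eq] using hx)
    have hdiff : DifferentiableOn ℂ (fun u : ℂ => (Q.eval u)⁻¹) (ball 0 1) := by
      apply DifferentiableOn.inv (Q.differentiable_aeval.differentiableOn)
      intro x hx
      exact hQne x (le_of_lt (by simpa [Complex.dist_eq] using hx))
    have hdc : DiffContOnCl ℂ (fun u : ℂ => (Q.eval u)⁻¹) (ball 0 1) :=
      ⟨hdiff, by rwa [closure_ball (0:ℂ) one_ne_zero]⟩
    have hfr : ∀ x ∈ frontier (ball (0:ℂ) 1), ‖(Q.eval x)⁻¹‖ ≤ m⁻¹ := by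
      intro x hx
      rw [frontier_ball (0:ℂ) one_ne_zero] at hx
      have hx1 : ‖x‖ = 1 := by simpa [Complex.dist_eq] using hx
      rw [norm_inv]
      exact inv_anti₀ hmpos (hbd x hx1)
    have := norm_le_of_forall_mem_frontier_norm_le (isBounded_ball) hdc hfr
      (z := u) (by rw [closure_ball (0:ℂ) one_ne_zero]; simpa [Complex.dist_eq] using hu)
    rw [norm_inv] at this
    have hQu := hQne u hu
    have hQpos : 0 < ‖Q.eval u‖ := by simpa using hQu
    calc m = (m⁻¹)⁻¹ := by rw [inv_inv]
    _ ≤ (‖Q.eval u‖⁻¹)⁻¹ := by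
        apply inv_anti₀ (by positivity) this
    _ = ‖Q.eval u‖ := by rw [inv_inv]
  -- conclude
  have hz0 : z ≠ 0 := by intro h; rw [h] at hz1; simp at hz1; linarith
  have h := key_eval P hz0
  have habs : ‖Q.eval z⁻¹‖ * ‖z‖ ^ P.natDegree
      = ‖P.eval z‖ := by rw [← h]; simp [map_mul, map_pow, hQ]
  have hQz := hmin z⁻¹ (by rw [norm_inv]; exact inv_le_one_of_one_le₀ hz1)
  rw [← habs, hdeg]
  have : (0:ℝ) ≤ ‖z‖ ^ n := by positivity
  nlinarith
end

section
/- Let P be a complex polynomial of degree n with no zeros in the open unit disk, and P* its conjugate-reverse polynomial. Then for every R > r ≥ 1 and α, β ∈ ℂ with |α| ≤ 1, |β| ≤ 1, setting φ = β(((R+1)/(r+1))^n − |α|) − α, for all |z| ≥ 1: |P(Rz) + φ P(rz)| ≤ |P*(Rz) + φ P*(rz)|. -/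
open Polynomial Complex Filter Topology

lemma norm_mprod (s : Multiset ℂ) : ‖s.prod‖ = (s.map (fun x => ‖x‖)).prod := by
  induction s using Multiset.induction_on <;> simp [*]

lemma key_real (R r ρ m s : ℝ) (hr : 1 ≤ r) (hRr : r < R) (hρ : 1 ≤ ρ)
    (hm0 : 0 ≤ m) (hm : m ≤ 1) (hs : -(ρ*m) ≤ s) (hs' : s ≤ ρ*m) :
    (R+1)^2 * (r^2*ρ^2 + m^2 - 2*r*s) ≤ (r+1)^2 * (R^2*ρ^2 + m^2 - 2*R*s) := by
  have hrR : (1:ℝ) ≤ r * R := by nlinarith [mul_le_mul hr (le_of_lt (lt_of_le_of_lt hr hRr)) (by norm_num : (0:ℝ) ≤ 1) (by linarith : (0:ℝ) ≤ r)]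
  have h1 : (0:ℝ) ≤ (R-r)*(r*R-1) * (s + ρ*m) :=
    mul_nonneg (by nlinarith : (0:ℝ) ≤ (R-r)*(r*R-1)) (by linarith)
  have h2 : (0:ℝ) ≤ (R-r)*(ρ-m) * ((r+1)*(R*ρ+m)+(R+1)*(r*ρ+m)) :=
    mul_nonneg (mul_nonneg (by linarith) (by linarith)) (by nlinarith)
  nlinarith [h1, h2]

lemma normSq_smul_sub (c : ℝ) (z y : ℂ) :
    Complex.normSq ((c:ℂ) * z - y)
      = c^2 * Complex.normSq z + Complex.normSq y - 2*c*(z * (starRingEnd ℂ) y).re := by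
  simp [Complex.normSq_apply, Complex.mul_re, Complex.mul_im, Complex.sub_re, Complex.sub_im]
  ring

lemma factor_growth (R r : ℝ) (z y : ℂ) (hr : 1 ≤ r) (hRr : r < R)
    (hz : 1 ≤ ‖z‖) (hy : ‖y‖ ≤ 1) :
    (R + 1) * ‖(r:ℂ) * z - y‖ ≤ (r + 1) * ‖(R:ℂ) * z - y‖ := by
  have hm0 : 0 ≤ ‖y‖ := norm_nonneg y
  set ρ := ‖z‖ with hρdef
  set m := ‖y‖ with hmdef
  set s := (z * (starRingEnd ℂ) y).re with hsdef
  have habs : |s| ≤ ρ * m := by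
    calc |s| ≤ ‖z * (starRingEnd ℂ) y‖ := Complex.abs_re_le_norm _
    _ = ρ * m := by rw [norm_mul, Complex.norm_conj]
  have hs1 : -(ρ*m) ≤ s := neg_le_of_abs_le habs
  have hs2 : s ≤ ρ*m := le_of_abs_le habs
  have key := key_real R r ρ m s hr hRr hz hm0 hy hs1 hs2
  have e1 : (‖(r:ℂ) * z - y‖)^2 = r^2*ρ^2 + m^2 - 2*r*s := by
    rw [Complex.sq_norm, normSq_smul_sub, ← Complex.sq_norm z, ← Complex.sq_norm y]
  have e2 : (‖(R:ℂ) * z - y‖)^2 = R^2*ρ^2 + m^2 - 2*R*s := by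
    rw [Complex.sq_norm, normSq_smul_sub, ← Complex.sq_norm z, ← Complex.sq_norm y]
  have ha : 0 ≤ ‖(r:ℂ) * z - y‖ := norm_nonneg _
  have hb : 0 ≤ ‖(R:ℂ) * z - y‖ := norm_nonneg _
  have hsq : ((R+1) * ‖(r:ℂ) * z - y‖)^2 ≤ ((r+1) * ‖(R:ℂ) * z - y‖)^2 := by
    rw [mul_pow, mul_pow, e1, e2]; exact key
  exact (pow_le_pow_iff_left₀ (mul_nonneg (by linarith) ha) (mul_nonneg (by linarith) hb) two_ne_zero).1 hsq

lemma factor_star (w u : ℂ) (hw : 1 ≤ ‖w‖) (hu : 1 ≤ ‖u‖) :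
    ‖w - u‖ ≤ ‖1 - (starRingEnd ℂ) u * w‖ := by
  have key : (‖1 - (starRingEnd ℂ) u * w‖)^2 - (‖w - u‖)^2
      = (Complex.normSq u - 1) * (Complex.normSq w - 1) := by
    rw [Complex.sq_norm, Complex.sq_norm]
    simp [Complex.normSq_apply, Complex.sub_re, Complex.sub_im, Complex.mul_re, Complex.mul_im]
    ring
  have h1 : 1 ≤ Complex.normSq u := by
    rw [← Complex.sq_norm]; nlinarith
  have h2 : 1 ≤ Complex.normSq w := by
    rw [← Complex.sq_norm]; nlinarith
  have ha : 0 ≤ ‖w - u‖ := norm_nonneg _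
  have hb : 0 ≤ ‖1 - (starRingEnd ℂ) u * w‖ := norm_nonneg _
  nlinarith [key, h1, h2, ha, hb]

lemma reflect_natDegree_le (q : Polynomial ℂ) (n : ℕ) (hq : q.natDegree ≤ n) :
    (Polynomial.reflect n q).natDegree ≤ n := by
  apply Polynomial.natDegree_le_iff_coeff_eq_zero.2
  intro k hk
  rw [Polynomial.coeff_reflect]
  apply Polynomial.coeff_eq_zero_of_natDegree_lt
  rcases le_or_gt k n with h | h
  · have : Polynomial.revAt n k = n - k := Polynomial.revAt_le h
    omega
  · rw [Polynomial.revAt_eq_self_of_lt h]; omega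

lemma eval_reflect (q : Polynomial ℂ) (n : ℕ) (hq : q.natDegree ≤ n) (w : ℂ) (hw : w ≠ 0) :
    (Polynomial.reflect n q).eval w = w ^ n * q.eval w⁻¹ := by
  have hd := reflect_natDegree_le q n hq
  rw [Polynomial.eval_eq_sum_range' (Nat.lt_succ_of_le hd),
      Polynomial.eval_eq_sum_range' (Nat.lt_succ_of_le hq)]
  rw [Finset.mul_sum, ← Finset.sum_range_reflect]
  apply Finset.sum_congr rfl
  intro i hi
  simp only [Finset.mem_range, Nat.succ_sub_one] at hi ⊢
  rw [Polynomial.coeff_reflect, Polynomial.revAt_le (by omega : n - i ≤ n)]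
  have h2 : n - (n - i) = i := by omega
  rw [h2]
  rw [pow_sub₀ w hw (by omega : i ≤ n), inv_pow]
  ring

lemma prodA (R r : ℝ) (hr : 1 ≤ r) (hRr : r < R) (t : Multiset ℂ) (f g : ℂ → ℝ)
    (hf : ∀ a ∈ t, 0 ≤ f a) (h : ∀ a ∈ t, (R+1) * f a ≤ (r+1) * g a) :
    ((R+1)/(r+1))^(Multiset.card t) * (t.map f).prod ≤ (t.map g).prod := by
  have hr1 : (0:ℝ) < r + 1 := by linarith
  have hR1 : (0:ℝ) ≤ R + 1 := by linarith
  have key : (t.map (fun a => (R+1)/(r+1) * f a)).prod ≤ (t.map g).prod := by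
    apply Multiset.prod_map_le_prod_map₀
    · intro a ha; exact mul_nonneg (div_nonneg hR1 hr1.le) (hf a ha)
    · intro a ha
      rw [div_mul_eq_mul_div, div_le_iff₀ hr1]
      have := h a ha; linarith
  calc ((R+1)/(r+1))^(Multiset.card t) * (t.map f).prod
      = (t.map (fun a => (R+1)/(r+1) * f a)).prod := by
        rw [Multiset.prod_map_mul, Multiset.map_const', Multiset.prod_replicate]
    _ ≤ (t.map g).prod := key

lemma core (P : Polynomial ℂ) (n : ℕ) (hdeg : P.natDegree = n)
    (hnz : ∀ z : ℂ, ‖z‖ < 1 → P.eval z ≠ 0)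
    (Pstar : Polynomial ℂ)
    (hPstar : Pstar = Polynomial.reflect n (P.map (starRingEnd ℂ)))
    (R r : ℝ) (hr : 1 ≤ r) (hRr : r < R)
    (φ : ℂ) (hφK : ‖φ‖ < ((R + 1) / (r + 1)) ^ n)
    (z : ℂ) (hz : 1 ≤ ‖z‖) :
    ‖P.eval ((R : ℂ) * z) + φ * P.eval ((r : ℂ) * z)‖ ≤
      ‖Pstar.eval ((R : ℂ) * z) + φ * Pstar.eval ((r : ℂ) * z)‖ := by
  have hR1 : (1:ℝ) < R := lt_of_le_of_lt hr hRr
  set K : ℝ := ((R + 1) / (r + 1)) ^ n with hKdef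
  -- basic facts
  have hP0 : P ≠ 0 := fun h => hnz 0 (by simp) (by simp [h])
  have hc : P.leadingCoeff ≠ 0 := Polynomial.leadingCoeff_ne_zero.mpr hP0
  set c := P.leadingCoeff with hcdef
  have hcard : Multiset.card P.roots = n := by
    rw [← hdeg]
    exact Polynomial.splits_iff_card_roots.mp (IsAlgClosed.splits P)
  have hfact := Polynomial.C_leadingCoeff_mul_prod_multiset_X_sub_C
    (p := P) (by rw [hcard, hdeg])
  have evalP : ∀ w : ℂ, P.eval w = c * ((P.roots.map (fun a => w - a)).prod) := by
    intro w
    conv_lhs => rw [← hfact]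
    rw [Polynomial.eval_mul, Polynomial.eval_C, Polynomial.eval_multiset_prod,
      Multiset.map_map]
    simp [Function.comp, hcdef]
  have hroots1 : ∀ a ∈ P.roots, 1 ≤ ‖a‖ := by
    intro a ha
    by_contra hlt
    push_neg at hlt
    exact hnz a hlt ((Polynomial.mem_roots'.mp ha).2)
  have evalPstar : ∀ w : ℂ, w ≠ 0 →
      Pstar.eval w = (starRingEnd ℂ) c * ((P.roots.map (fun a => 1 - (starRingEnd ℂ) a * w)).prod) := by
    intro w hw
    rw [hPstar, eval_reflect _ n (le_trans Polynomial.natDegree_map_le hdeg.le) w hw]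
    have e1 : (P.map (starRingEnd ℂ)).eval w⁻¹ = (starRingEnd ℂ) (P.eval ((starRingEnd ℂ) w⁻¹)) := by
      conv_lhs => rw [← Complex.conj_conj w⁻¹]
      rw [Polynomial.eval_map, Polynomial.eval₂_at_apply]
    rw [e1, evalP, map_mul, map_multiset_prod, Multiset.map_map]
    have e2 : ∀ a : ℂ, (starRingEnd ℂ) ((starRingEnd ℂ) w⁻¹ - a) = w⁻¹ - (starRingEnd ℂ) a := by
      intro a; rw [map_sub, Complex.conj_conj]
    have e3 : (P.roots.map (fun a => (starRingEnd ℂ) ((starRingEnd ℂ) w⁻¹ - a))).prod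
        = (P.roots.map (fun a => w⁻¹ - (starRingEnd ℂ) a)).prod := by
      congr 1; exact Multiset.map_congr rfl (fun a _ => e2 a)
    rw [show ((fun a => (starRingEnd ℂ) ((starRingEnd ℂ) w⁻¹ - a)) : ℂ → ℂ) = (starRingEnd ℂ) ∘ (fun a => (starRingEnd ℂ) w⁻¹ - a) from rfl] at e3
    rw [e3]
    have e4 : w ^ n = (P.roots.map (fun _ => w)).prod := by
      rw [Multiset.map_const', Multiset.prod_replicate, hcard]
    rw [e4, mul_left_comm, ← Multiset.prod_map_mul]
    congr 2
    apply Multiset.map_congr rfl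
    intro a _
    rw [mul_sub, mul_inv_cancel₀ hw]
    ring
  have absP : ∀ w : ℂ, ‖P.eval w‖
      = ‖c‖ * ((P.roots.map (fun a => ‖w - a‖)).prod) := by
    intro w
    rw [evalP, norm_mul, norm_mprod, Multiset.map_map]
    rfl
  have absPstar : ∀ w : ℂ, w ≠ 0 → ‖Pstar.eval w‖
      = ‖c‖ * ((P.roots.map (fun a => ‖1 - (starRingEnd ℂ) a * w‖)).prod) := by
    intro w hw
    rw [evalPstar w hw, norm_mul, norm_mprod, Multiset.map_map, Complex.norm_conj]
    rfl
  have hPstarNe : ∀ w : ℂ, 1 < ‖w‖ → Pstar.eval w ≠ 0 := by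
    intro w hw
    have hw0 : w ≠ 0 := by
      intro h; rw [h] at hw; simp at hw; linarith
    rw [evalPstar w hw0]
    apply mul_ne_zero (by simpa using hc)
    apply Multiset.prod_ne_zero
    intro h0
    obtain ⟨a, ha, heq⟩ := Multiset.mem_map.mp h0
    have h1 : (starRingEnd ℂ) a * w = 1 := (sub_eq_zero.mp heq).symm
    have : ‖(starRingEnd ℂ) a * w‖ = 1 := by rw [h1]; simp
    rw [norm_mul, Complex.norm_conj] at this
    have ha1 := hroots1 a ha
    nlinarith
  have hPle : ∀ w : ℂ, 1 ≤ ‖w‖ →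
      ‖P.eval w‖ ≤ ‖Pstar.eval w‖ := by
    intro w hw
    have hw0 : w ≠ 0 := by
      intro h; rw [h] at hw; simp at hw; linarith
    rw [absP, absPstar w hw0]
    apply mul_le_mul_of_nonneg_left _ (norm_nonneg c)
    apply Multiset.prod_map_le_prod_map₀
    · intro a _; exact norm_nonneg _
    · intro a ha; exact factor_star w a hw (hroots1 a ha)
  -- abs of R*z, r*z
  have hRz : ‖(R:ℂ) * z‖ = R * ‖z‖ := by
    rw [norm_mul, Complex.norm_real, Real.norm_eq_abs, abs_of_pos (by linarith)]
  have hrz : ‖(r:ℂ) * z‖ = r * ‖z‖ := by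
    rw [norm_mul, Complex.norm_real, Real.norm_eq_abs, abs_of_pos (by linarith)]
  have hRz1 : 1 < ‖(R:ℂ) * z‖ := by
    rw [hRz]; nlinarith
  have hrz1 : 1 ≤ ‖(r:ℂ) * z‖ := by
    rw [hrz]; nlinarith
  have hRzne : ((R:ℂ) * z) ≠ 0 := by
    intro h; rw [h] at hRz1; simp at hRz1; linarith
  have hrzne : ((r:ℂ) * z) ≠ 0 := by
    intro h
    rw [h] at hrz1; simp at hrz1; linarith
  -- Lemma A for Pstar
  have hK0 : (0:ℝ) < K := by
    apply pow_pos; apply div_pos <;> linarith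
  have LemA_star : K * ‖Pstar.eval ((r:ℂ) * z)‖ ≤ ‖Pstar.eval ((R:ℂ) * z)‖ := by
    rw [absPstar _ hrzne, absPstar _ hRzne]
    rw [mul_left_comm]
    apply mul_le_mul_of_nonneg_left _ (norm_nonneg c)
    have := prodA R r hr hRr P.roots
      (fun a => ‖1 - (starRingEnd ℂ) a * ((r:ℂ) * z)‖)
      (fun a => ‖1 - (starRingEnd ℂ) a * ((R:ℂ) * z)‖)
      (fun a _ => norm_nonneg _) ?_
    · rwa [hcard] at this
    · intro a ha
      have ha1 := hroots1 a ha
      have hane : (starRingEnd ℂ) a ≠ 0 := by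
        rw [ne_eq, _root_.map_eq_zero]
        intro h; rw [h] at ha1; simp at ha1; linarith
      have habs_eq : ∀ w : ℂ, ‖1 - (starRingEnd ℂ) a * w‖
          = ‖a‖ * ‖w - ((starRingEnd ℂ) a)⁻¹‖ := by
        intro w
        rw [show (1 : ℂ) - (starRingEnd ℂ) a * w = (starRingEnd ℂ) a * (((starRingEnd ℂ) a)⁻¹ - w) by
          rw [mul_sub, mul_inv_cancel₀ hane]]
        rw [norm_mul, Complex.norm_conj, norm_sub_rev]
      rw [habs_eq, habs_eq, mul_comm (‖a‖), mul_comm (‖a‖),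
        ← mul_assoc, ← mul_assoc]
      apply mul_le_mul_of_nonneg_right _ (norm_nonneg a)
      apply factor_growth R r z _ hr hRr hz
      rw [norm_inv, Complex.norm_conj]
      exact inv_le_one_of_one_le₀ ha1
  set A := P.eval ((R:ℂ) * z) + φ * P.eval ((r:ℂ) * z) with hA
  set B := Pstar.eval ((R:ℂ) * z) + φ * Pstar.eval ((r:ℂ) * z) with hB
  have hPsRne : Pstar.eval ((R:ℂ) * z) ≠ 0 := hPstarNe _ hRz1
  have hBne : B ≠ 0 := by
    rcases eq_or_ne (Pstar.eval ((r:ℂ) * z)) 0 with h0 | h0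
    · rw [hB, h0]; simpa using hPsRne
    · have hlt : ‖φ * Pstar.eval ((r:ℂ) * z)‖ < ‖Pstar.eval ((R:ℂ) * z)‖ := by
        rw [norm_mul]
        calc ‖φ‖ * ‖Pstar.eval ((r:ℂ) * z)‖
            < K * ‖Pstar.eval ((r:ℂ) * z)‖ := by
              apply mul_lt_mul_of_pos_right hφK
              exact (norm_pos_iff.mpr h0)
          _ ≤ _ := LemA_star
      intro heq
      rw [hB] at heq
      have : Pstar.eval ((R:ℂ) * z) = -(φ * Pstar.eval ((r:ℂ) * z)) := by
        linear_combination heq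
      rw [this, norm_neg] at hlt
      exact lt_irrefl _ hlt
  by_contra hcon
  push_neg at hcon
  set lam := A / B with hlam
  have hlam1 : 1 < ‖lam‖ := by
    rw [hlam, norm_div]
    rw [lt_div_iff₀ (norm_pos_iff.mpr hBne), one_mul]
    exact hcon
  -- h polynomial
  set h : Polynomial ℂ := P - Polynomial.C lam * Pstar with hhdef
  have hPstar_deg : Pstar.natDegree ≤ n := by
    rw [hPstar]
    exact reflect_natDegree_le _ n (le_trans Polynomial.natDegree_map_le hdeg.le)
  have hPstar_coeff_n : Pstar.coeff n = (starRingEnd ℂ) (P.coeff 0) := by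
    rw [hPstar, Polynomial.coeff_reflect, Polynomial.revAt_le (le_refl n), Nat.sub_self,
      Polynomial.coeff_map]
  have ha0 : P.coeff 0 ≠ 0 := by
    rw [Polynomial.coeff_zero_eq_eval_zero]
    exact hnz 0 (by simp)
  have han : P.coeff n = c := by rw [hcdef, Polynomial.leadingCoeff, hdeg]
  have hanle : ‖P.coeff n‖ ≤ ‖P.coeff 0‖ := by
    rw [han, Polynomial.coeff_zero_eq_eval_zero, absP]
    have h1 : (1:ℝ) ≤ (P.roots.map (fun a => ‖(0:ℂ) - a‖)).prod := by
      apply Multiset.one_le_prod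
      intro x hx
      obtain ⟨a, ha, rfl⟩ := Multiset.mem_map.mp hx
      rw [zero_sub, norm_neg]
      exact hroots1 a ha
    nlinarith [norm_nonneg c]
  have hcoeffn : h.coeff n ≠ 0 := by
    rw [hhdef, Polynomial.coeff_sub, Polynomial.coeff_C_mul, hPstar_coeff_n]
    intro heq
    have heq2 : P.coeff n = lam * (starRingEnd ℂ) (P.coeff 0) := by
      linear_combination heq
    have := congrArg (fun x => ‖x‖) heq2
    rw [norm_mul, Complex.norm_conj] at this
    have h2 : ‖P.coeff 0‖ < ‖lam‖ * ‖P.coeff 0‖ := by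
      nlinarith [norm_pos_iff.mpr ha0]
    rw [← this] at h2
    linarith [hanle]
  have hh0 : h ≠ 0 := fun e => hcoeffn (by rw [e]; simp)
  have hdegh : h.natDegree = n := by
    apply le_antisymm
    · apply le_trans (Polynomial.natDegree_sub_le _ _)
      apply max_le hdeg.le
      exact le_trans (Polynomial.natDegree_C_mul_le _ _) hPstar_deg
    · exact Polynomial.le_natDegree_of_ne_zero hcoeffn
  have hcardh : Multiset.card h.roots = n := by
    rw [← hdegh]
    exact Polynomial.splits_iff_card_roots.mp (IsAlgClosed.splits h)
  have hfacth := Polynomial.C_leadingCoeff_mul_prod_multiset_X_sub_C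
    (p := h) (by rw [hcardh, hdegh])
  have evalh : ∀ w : ℂ, h.eval w = h.leadingCoeff * ((h.roots.map (fun a => w - a)).prod) := by
    intro w
    conv_lhs => rw [← hfacth]
    rw [Polynomial.eval_mul, Polynomial.eval_C, Polynomial.eval_multiset_prod,
      Multiset.map_map]
    simp [Function.comp]
  have evalh' : ∀ w : ℂ, h.eval w = P.eval w - lam * Pstar.eval w := by
    intro w; rw [hhdef]; simp
  have hrootsh : ∀ y ∈ h.roots, ‖y‖ ≤ 1 := by
    intro y hy
    by_contra hgt
    push_neg at hgt
    have heval : h.eval y = 0 := (Polynomial.mem_roots'.mp hy).2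
    have hPy : P.eval y = lam * Pstar.eval y := by
      have := evalh' y; rw [heval] at this; linear_combination -this
    have hPsy : Pstar.eval y ≠ 0 := hPstarNe y hgt
    have h1 : ‖P.eval y‖ ≤ ‖Pstar.eval y‖ := hPle y hgt.le
    have h2 : ‖P.eval y‖ = ‖lam‖ * ‖Pstar.eval y‖ := by
      rw [hPy, norm_mul]
    nlinarith [norm_pos_iff.mpr hPsy]
  have habsh : ∀ w : ℂ, ‖h.eval w‖
      = ‖h.leadingCoeff‖ * ((h.roots.map (fun a => ‖w - a‖)).prod) := by
    intro w
    rw [evalh, norm_mul, norm_mprod, Multiset.map_map]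
    rfl
  have LemA_h : K * ‖h.eval ((r:ℂ) * z)‖ ≤ ‖h.eval ((R:ℂ) * z)‖ := by
    rw [habsh, habsh, mul_left_comm]
    apply mul_le_mul_of_nonneg_left _ (norm_nonneg _)
    have := prodA R r hr hRr h.roots
      (fun a => ‖(r:ℂ) * z - a‖)
      (fun a => ‖(R:ℂ) * z - a‖)
      (fun a _ => norm_nonneg _)
      (fun a ha => factor_growth R r z a hr hRr hz (hrootsh a ha))
    rwa [hcardh] at this
  have hzero : h.eval ((R:ℂ) * z) + φ * h.eval ((r:ℂ) * z) = 0 := by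
    rw [evalh', evalh']
    have : lam * B = A := div_mul_cancel₀ A hBne
    rw [hA, hB] at this
    linear_combination -this
  rcases eq_or_ne (h.eval ((r:ℂ) * z)) 0 with hz0 | hz0
  · have hz1 : h.eval ((R:ℂ) * z) = 0 := by
      rw [hz0] at hzero; simpa using hzero
    have hmem : ((R:ℂ) * z) ∈ h.roots := by
      rw [Polynomial.mem_roots']
      exact ⟨hh0, hz1⟩
    have := hrootsh _ hmem
    linarith
  · have heq : h.eval ((R:ℂ) * z) = -(φ * h.eval ((r:ℂ) * z)) := by
      linear_combination hzero
    have h1 : ‖h.eval ((R:ℂ) * z)‖ = ‖φ‖ * ‖h.eval ((r:ℂ) * z)‖ := by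
      rw [heq, norm_neg, norm_mul]
    have h2 : ‖φ‖ * ‖h.eval ((r:ℂ) * z)‖ < K * ‖h.eval ((r:ℂ) * z)‖ :=
      mul_lt_mul_of_pos_right hφK (norm_pos_iff.mpr hz0)
    linarith

theorem stmt_14 (P : Polynomial ℂ) (n : ℕ) (hdeg : P.natDegree = n)
    (hnz : ∀ z : ℂ, ‖z‖ < 1 → P.eval z ≠ 0)
    (Pstar : Polynomial ℂ)
    (hPstar : Pstar = Polynomial.reflect n (P.map (starRingEnd ℂ)))
    (R r : ℝ) (hr : 1 ≤ r) (hRr : r < R)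
    (α β : ℂ) (hα : ‖α‖ ≤ 1) (hβ : ‖β‖ ≤ 1)
    (φ : ℂ) (hφ : φ = β * ((((R + 1) / (r + 1)) ^ n : ℝ) - ‖α‖) - α) :
    ∀ z : ℂ, 1 ≤ ‖z‖ →
      ‖P.eval ((R : ℂ) * z) + φ * P.eval ((r : ℂ) * z)‖ ≤
        ‖Pstar.eval ((R : ℂ) * z) + φ * Pstar.eval ((r : ℂ) * z)‖ := by
  intro z hz
  set K : ℝ := ((R + 1) / (r + 1)) ^ n with hKdef
  have hK1 : (1:ℝ) ≤ K := by
    apply one_le_pow₀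
    rw [le_div_iff₀ (by linarith)]
    linarith
  have hφK : ‖φ‖ ≤ K := by
    rw [hφ]
    have e1 : ((K:ℝ):ℂ) - ((‖α‖ : ℝ):ℂ) = ((K - ‖α‖ : ℝ):ℂ) := by
      push_cast; ring
    calc ‖β * (((K:ℝ):ℂ) - ((‖α‖ : ℝ):ℂ)) - α‖
        ≤ ‖β * (((K:ℝ):ℂ) - ((‖α‖ : ℝ):ℂ))‖ + ‖α‖ := by
          exact norm_sub_le _ _
      _ = ‖β‖ * (K - ‖α‖) + ‖α‖ := by
          rw [norm_mul, e1, Complex.norm_real, Real.norm_eq_abs,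
            _root_.abs_of_nonneg (by linarith : (0:ℝ) ≤ K - ‖α‖)]
      _ ≤ 1 * (K - ‖α‖) + ‖α‖ := by
          have : (0:ℝ) ≤ K - ‖α‖ := by linarith
          nlinarith
      _ = K := by ring
  rcases lt_or_eq_of_le hφK with hlt | heq
  · exact core P n hdeg hnz Pstar hPstar R r hr hRr φ hlt z hz
  · -- limit argument
    have hK0 : (0:ℝ) < K := by linarith
    set F : ℝ → ℝ := fun t =>
      ‖P.eval ((R : ℂ) * z) + ((t:ℝ):ℂ) * φ * P.eval ((r : ℂ) * z)‖ with hF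
    set G : ℝ → ℝ := fun t =>
      ‖Pstar.eval ((R : ℂ) * z) + ((t:ℝ):ℂ) * φ * Pstar.eval ((r : ℂ) * z)‖ with hG
    have hcont : ∀ (q : Polynomial ℂ), Continuous (fun t : ℝ =>
        ‖q.eval ((R : ℂ) * z) + ((t:ℝ):ℂ) * φ * q.eval ((r : ℂ) * z)‖) := by
      intro q
      apply continuous_norm.comp
      continuity
    have hFle : ∀ t ∈ Set.Ioo (0:ℝ) 1, F t ≤ G t := by
      intro t ht
      apply core P n hdeg hnz Pstar hPstar R r hr hRr _ _ z hz
      rw [norm_mul, Complex.norm_real, Real.norm_eq_abs, abs_of_pos ht.1, heq]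
      calc t * K < 1 * K := by
            apply mul_lt_mul_of_pos_right ht.2 hK0
        _ = K := one_mul K
    have hne : (𝓝[<] (1:ℝ)).NeBot := nhdsLT_neBot 1
    have hFt : Filter.Tendsto F (𝓝[<] (1:ℝ)) (𝓝 (F 1)) :=
      ((hcont P).tendsto 1).mono_left nhdsWithin_le_nhds
    have hGt : Filter.Tendsto G (𝓝[<] (1:ℝ)) (𝓝 (G 1)) :=
      ((hcont Pstar).tendsto 1).mono_left nhdsWithin_le_nhds
    have hev : ∀ᶠ t in 𝓝[<] (1:ℝ), F t ≤ G t := by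
      filter_upwards [Ioo_mem_nhdsLT_of_mem (Set.mem_Ioc.mpr ⟨zero_lt_one, le_refl 1⟩)] with t ht
      exact hFle t ht
    have hfin : F 1 ≤ G 1 := le_of_tendsto_of_tendsto hFt hGt hev
    simpa [hF, hG] using hfin
end

section
/- Let F be a complex polynomial of degree n with all zeros in the closed unit disk, and P a polynomial of degree at most n with |P(z)| ≤ |F(z)| on |z| = 1. Then for all R > r ≥ 1, α, β ∈ ℂ with |α| ≤ 1, |β| ≤ 1, and φ = β(((R+1)/(r+1))^n − |α|) − α, for every |z| ≥ 1: |P(Rz) + φ P(rz)| ≤ |F(Rz) + φ F(rz)|. -/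
open Polynomial Complex Filter Metric

lemma factor_ineq_r (R r a b t : ℝ) (hr : 1 ≤ r) (hR : r ≤ R) (ha : 1 ≤ a)
    (hb0 : 0 ≤ b) (hb : b ≤ 1) (ht : -(a*b) ≤ t) :
    (R+1)^2*(r^2*a^2 - 2*r*t + b^2) ≤ (r+1)^2*(R^2*a^2 - 2*R*t + b^2) := by
  have hE : 0 ≤ (R+r)*(a+b) + 2*R*r*a + 2*b := by
    have h1 : (0:ℝ) ≤ (R+r)*(a+b) := mul_nonneg (by linarith) (by linarith)
    have h2 : (0:ℝ) ≤ R*r*a := mul_nonneg (mul_nonneg (by linarith) (by linarith)) (by linarith)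
    linarith
  nlinarith [mul_nonneg (sub_nonneg.2 hR) (mul_nonneg (sub_nonneg.2 (by nlinarith : (1:ℝ) ≤ r*R)) (by nlinarith : 0 ≤ t + a*b)),
    mul_nonneg (sub_nonneg.2 hR) (mul_nonneg (sub_nonneg.2 (hb.trans ha)) hE)]

lemma factor_ineq (R r : ℝ) (hr : 1 ≤ r) (hR : r ≤ R) (z w : ℂ)
    (hz : 1 ≤ ‖z‖) (hw : ‖w‖ ≤ 1) :
    (R+1)/(r+1) * ‖(r:ℂ)*z - w‖ ≤ ‖(R:ℂ)*z - w‖ := by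
  have hr1 : (0:ℝ) < r + 1 := by linarith
  rw [div_mul_eq_mul_div, div_le_iff₀ hr1]
  have h1 : 0 ≤ ‖(R:ℂ)*z - w‖ * (r+1) := by
    exact mul_nonneg (norm_nonneg _) (by linarith)
  have h2 : 0 ≤ (R+1) * ‖(r:ℂ)*z - w‖ := by
    exact mul_nonneg (by linarith) (norm_nonneg _)
  rw [← Real.sqrt_sq h1, ← Real.sqrt_sq h2]
  apply Real.sqrt_le_sqrt
  have e1 : ‖(R:ℂ)*z - w‖^2 = R^2 * ‖z‖^2 - 2*R*(z*(starRingEnd ℂ) w).re + ‖w‖ ^2 := by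
    rw [← Complex.normSq_eq_norm_sq, ← Complex.normSq_eq_norm_sq, ← Complex.normSq_eq_norm_sq]
    simp [Complex.normSq_apply, Complex.mul_re, Complex.mul_im]
    ring
  have e2 : ‖(r:ℂ)*z - w‖^2 = r^2 * ‖z‖^2 - 2*r*(z*(starRingEnd ℂ) w).re + ‖w‖ ^2 := by
    rw [← Complex.normSq_eq_norm_sq, ← Complex.normSq_eq_norm_sq, ← Complex.normSq_eq_norm_sq]
    simp [Complex.normSq_apply, Complex.mul_re, Complex.mul_im]
    ring
  have hx : |(z*(starRingEnd ℂ) w).re| ≤ ‖z‖ * ‖w‖ := by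
    calc |(z*(starRingEnd ℂ) w).re| ≤ ‖z*(starRingEnd ℂ) w‖ := Complex.abs_re_le_norm _
      _ = ‖z‖ * ‖w‖ := by rw [norm_mul, Complex.norm_conj]
  have ht : -(‖z‖ * ‖w‖) ≤ (z*(starRingEnd ℂ) w).re := by
    have := neg_abs_le (z*(starRingEnd ℂ) w).re
    linarith
  have key := factor_ineq_r R r (‖z‖) (‖w‖) ((z*(starRingEnd ℂ) w).re) hr hR hz (norm_nonneg w) hw ht
  calc ((R+1) * ‖(r:ℂ)*z - w‖)^2 = (R+1)^2 * (r^2 * ‖z‖^2 - 2*r*(z*(starRingEnd ℂ) w).re + ‖w‖ ^2) := by rw [mul_pow, e2]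
    _ ≤ (r+1)^2 * (R^2 * ‖z‖^2 - 2*R*(z*(starRingEnd ℂ) w).re + ‖w‖ ^2) := key
    _ = (‖(R:ℂ)*z - w‖ * (r+1))^2 := by rw [mul_pow, e1]; ring

lemma abs_eval_prod (G : Polynomial ℂ) (hcard : Multiset.card G.roots = G.natDegree) (x : ℂ) :
    ‖G.eval x‖ =
      ‖G.leadingCoeff‖ * (G.roots.map (fun w => ‖x - w‖)).prod := by
  conv_lhs => rw [← Polynomial.C_leadingCoeff_mul_prod_multiset_X_sub_C hcard]
  rw [eval_mul, eval_C, norm_mul, eval_multiset_prod, (by intro s; exact (Multiset.prod_hom s (normHom : ℂ →*₀ ℝ)).symm : ∀ s : Multiset ℂ, ‖s.prod‖ = (s.map (‖·‖)).prod), Multiset.map_map, Multiset.map_map]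
  simp

lemma lemA (G : Polynomial ℂ) (hG : G ≠ 0) (hroots : ∀ w, G.eval w = 0 → ‖w‖ ≤ 1)
    (R r : ℝ) (hr : 1 ≤ r) (hR : r ≤ R) (z : ℂ) (hz : 1 ≤ ‖z‖) :
    ((R+1)/(r+1))^G.natDegree * ‖G.eval ((r:ℂ)*z)‖ ≤ ‖G.eval ((R:ℂ)*z)‖ := by
  have hcard : Multiset.card G.roots = G.natDegree :=
    Polynomial.splits_iff_card_roots.mp (IsAlgClosed.splits G)
  rw [abs_eval_prod G hcard, abs_eval_prod G hcard, ← hcard]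
  rw [mul_comm (((R+1)/(r+1))^Multiset.card G.roots) _, mul_assoc]
  apply mul_le_mul_of_nonneg_left _ (norm_nonneg _)
  have step : ((R+1)/(r+1)) ^ Multiset.card G.roots * (Multiset.map (fun w => ‖(r:ℂ)*z - w‖) G.roots).prod
      = (Multiset.map (fun w => (R+1)/(r+1) * ‖(r:ℂ)*z - w‖) G.roots).prod := by
    rw [Multiset.prod_map_mul, Multiset.map_const', Multiset.prod_replicate]
  rw [mul_comm, step]
  apply Multiset.prod_map_le_prod_map₀
  · intro w hw
    exact mul_nonneg (div_nonneg (by linarith) (by linarith)) (norm_nonneg _)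
  · intro w hw
    exact factor_ineq R r hr hR z w hz (hroots w (Polynomial.isRoot_of_mem_roots hw))

lemma circle_limit (Q G : Polynomial ℂ) (v : ℂ) (hv : ‖v‖ = 1)
    (h : ∀ x : ℂ, ‖x‖ = 1 → x ≠ v → ‖Q.eval x‖ ≤ ‖G.eval x‖) :
    ‖Q.eval v‖ ≤ ‖G.eval v‖ := by
  set u : ℕ → ℂ := fun k => v * Complex.exp (Complex.I * ((((k:ℝ)+1)⁻¹ : ℝ) : ℂ)) with hu
  have htr : Tendsto (fun k : ℕ => (((k:ℝ)+1)⁻¹ : ℝ)) atTop (nhds 0) := by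
    have := tendsto_one_div_add_atTop_nhds_zero_nat (𝕜 := ℝ)
    simpa [one_div] using this
  have hc : Continuous fun t : ℝ => v * Complex.exp (Complex.I * (t:ℂ)) := by continuity
  have htend : Tendsto u atTop (nhds v) := by
    have := (hc.tendsto 0).comp htr
    simpa [hu, Function.comp_def] using this
  have habs : ∀ k : ℕ, ‖u k‖ = 1 := by
    intro k
    simp [hu, norm_mul, hv, Complex.norm_exp]
  have hne : ∀ k : ℕ, u k ≠ v := by
    intro k heq
    have hv0 : v ≠ 0 := by
      intro h0; rw [h0] at hv; simp at hv
    have hexp : Complex.exp (Complex.I * ((((k:ℝ)+1)⁻¹ : ℝ) : ℂ)) = 1 :=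
      mul_left_cancel₀ hv0 (heq.trans (mul_one v).symm)
    rw [Complex.exp_eq_one_iff] at hexp
    obtain ⟨m, hm⟩ := hexp
    have him : (((k:ℝ)+1)⁻¹ : ℝ) = (m:ℝ) * (2 * Real.pi) := by
      have h2 : Complex.I * ((((k:ℝ)+1)⁻¹ : ℝ) : ℂ) = Complex.I * ((((m:ℝ) * (2 * Real.pi) : ℝ)) : ℂ) := by
        rw [hm]; push_cast; ring
      exact_mod_cast mul_left_cancel₀ Complex.I_ne_zero h2
    have hpos : (0:ℝ) < ((k:ℝ)+1)⁻¹ := by positivity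
    have hle1 : (((k:ℝ)+1)⁻¹ : ℝ) ≤ 1 := by
      rw [inv_le_one_iff₀]; right; linarith [Nat.cast_nonneg (α := ℝ) k]
    have hpi : (2:ℝ) * Real.pi > 1 := by
      have := Real.pi_gt_three; linarith
    rcases le_or_gt (m:ℝ) 0 with hm0 | hm0
    · nlinarith [Real.pi_pos]
    · have hm1 : (1:ℤ) ≤ m := by
        have : (0:ℤ) < m := by exact_mod_cast hm0
        omega
      have : (1:ℝ) ≤ (m:ℝ) := by exact_mod_cast hm1
      nlinarith [Real.pi_pos]
  have ht1 : Tendsto (fun k => ‖Q.eval (u k)‖) atTop (nhds (‖Q.eval v‖)) := by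
    exact ((continuous_norm.comp (Q.continuous_aeval)).tendsto v).comp htend
  have ht2 : Tendsto (fun k => ‖G.eval (u k)‖) atTop (nhds (‖G.eval v‖)) := by
    exact ((continuous_norm.comp (G.continuous_aeval)).tendsto v).comp htend
  exact le_of_tendsto_of_tendsto' ht1 ht2 fun k => h (u k) (habs k) (hne k)

lemma maxmod_base (Q G : Polynomial ℂ)
    (hle : ∀ x : ℂ, ‖x‖ = 1 → ‖Q.eval x‖ ≤ ‖G.eval x‖)
    (hnz : ∀ x : ℂ, ‖x‖ ≤ 1 → G.eval x ≠ 0) :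
    ∀ w : ℂ, ‖w‖ ≤ 1 → ‖Q.eval w‖ ≤ ‖G.eval w‖ := by
  intro w hw
  set f : ℂ → ℂ := fun x => Q.eval x / G.eval x with hf
  have hcl : closure (ball (0:ℂ) 1) = closedBall (0:ℂ) 1 := closure_ball 0 one_ne_zero
  have habs_mem : ∀ x : ℂ, x ∈ closedBall (0:ℂ) 1 → ‖x‖ ≤ 1 := by
    intro x hx
    simpa [Complex.dist_eq] using mem_closedBall.mp hx
  have hd : DiffContOnCl ℂ f (ball (0:ℂ) 1) := by
    constructor
    · apply DifferentiableOn.div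
      · exact (Q.differentiable).differentiableOn
      · exact (G.differentiable).differentiableOn
      · intro x hx
        exact hnz x (habs_mem x (ball_subset_closedBall hx))
    · rw [hcl]
      apply ContinuousOn.div
      · exact (Q.continuous_aeval).continuousOn
      · exact (G.continuous_aeval).continuousOn
      · intro x hx
        exact hnz x (habs_mem x hx)
  have hC : ∀ x ∈ frontier (ball (0:ℂ) 1), ‖f x‖ ≤ 1 := by
    intro x hx
    rw [frontier_ball (0:ℂ) one_ne_zero] at hx
    have hx1 : ‖x‖ = 1 := by simpa [Complex.dist_eq] using mem_sphere.mp hx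
    have hGx : G.eval x ≠ 0 := hnz x (le_of_eq hx1)
    rw [hf]
    simp only [norm_div]
    rw [div_le_one (norm_pos_iff.mpr hGx)]
    exact hle x hx1
  have hmem : w ∈ closure (ball (0:ℂ) 1) := by
    rw [hcl]; exact mem_closedBall.mpr (by simpa [Complex.dist_eq] using hw)
  have := Complex.norm_le_of_forall_mem_frontier_norm_le isBounded_ball hd hC hmem
  have hGw : G.eval w ≠ 0 := hnz w hw
  rw [hf] at this
  simp only [norm_div] at this
  rw [div_le_one (norm_pos_iff.mpr hGw)] at this
  exact this


lemma maxmod : ∀ (N : ℕ) (Q G : Polynomial ℂ), G.natDegree ≤ N →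
    (∀ x : ℂ, ‖x‖ = 1 → ‖Q.eval x‖ ≤ ‖G.eval x‖) →
    (∀ w : ℂ, ‖w‖ < 1 → G.eval w ≠ 0) →
    ∀ w : ℂ, ‖w‖ ≤ 1 → ‖Q.eval w‖ ≤ ‖G.eval w‖ := by
  intro N
  induction N with
  | zero =>
    intro Q G hdeg hle hnz w hw
    -- G is a nonzero constant, so no zeros on closed disk; use max modulus
    have hG0 : G.eval 0 ≠ 0 := hnz 0 (by simp)
    obtain ⟨c, rfl⟩ : ∃ c, G = C c := ⟨G.coeff 0, (Polynomial.eq_C_of_natDegree_le_zero hdeg)⟩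
    have hc : c ≠ 0 := by simpa using hG0
    have hnz' : ∀ x : ℂ, ‖x‖ ≤ 1 → (C c : Polynomial ℂ).eval x ≠ 0 := by
      intro x _; simpa using hc
    exact maxmod_base Q (C c) hle hnz' w hw
  | succ N ih =>
    intro Q G hdeg hle hnz w hw
    by_cases hcz : ∃ v : ℂ, ‖v‖ = 1 ∧ G.eval v = 0
    · obtain ⟨v, hv1, hv2⟩ := hcz
      have hQv : Q.eval v = 0 := by
        have := hle v hv1
        rw [hv2] at this
        exact norm_eq_zero.mp <| le_antisymm (by simpa only [norm_zero] using this) (norm_nonneg _)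
      obtain ⟨Q', hQ'⟩ := (Polynomial.dvd_iff_isRoot.mpr hQv)
      obtain ⟨G', hG'⟩ := (Polynomial.dvd_iff_isRoot.mpr hv2)
      have hGne : G ≠ 0 := fun h0 => hnz 0 (by simp) (by simp [h0])
      have hG'ne : G' ≠ 0 := fun h0 => hGne (by simp [hG', h0])
      have hdeg' : G'.natDegree ≤ N := by
        have := Polynomial.natDegree_mul (Polynomial.X_sub_C_ne_zero v) hG'ne
        rw [← hG', Polynomial.natDegree_X_sub_C] at this
        omega
      have hle'ne : ∀ x : ℂ, ‖x‖ = 1 → x ≠ v →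
          ‖Q'.eval x‖ ≤ ‖G'.eval x‖ := by
        intro x hx hxv
        have h := hle x hx
        rw [hQ', hG', Polynomial.eval_mul, Polynomial.eval_mul, norm_mul, norm_mul] at h
        have hpos : 0 < ‖(X - C v).eval x‖ := by
          simp only [Polynomial.eval_sub, Polynomial.eval_X, Polynomial.eval_C]
          exact norm_pos_iff.mpr (sub_ne_zero.mpr hxv)
        exact le_of_mul_le_mul_left h hpos
      have hle' : ∀ x : ℂ, ‖x‖ = 1 →
          ‖Q'.eval x‖ ≤ ‖G'.eval x‖ := by
        intro x hx
        by_cases hxv : x = v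
        · subst hxv; exact circle_limit Q' G' x hx hle'ne
        · exact hle'ne x hx hxv
      have hnz' : ∀ w : ℂ, ‖w‖ < 1 → G'.eval w ≠ 0 := by
        intro w hw h0
        exact hnz w hw (by rw [hG', Polynomial.eval_mul, h0, mul_zero])
      have := ih Q' G' hdeg' hle' hnz' w hw
      rw [hQ', hG', Polynomial.eval_mul, Polynomial.eval_mul, norm_mul, norm_mul]
      exact mul_le_mul_of_nonneg_left this (norm_nonneg _)
    · push_neg at hcz
      have hnz' : ∀ x : ℂ, ‖x‖ ≤ 1 → G.eval x ≠ 0 := by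
        intro x hx
        rcases lt_or_eq_of_le hx with h | h
        · exact hnz x h
        · exact hcz x h
      exact maxmod_base Q G hle hnz' w hw

lemma reflect_eval (p : Polynomial ℂ) (n : ℕ) (h : p.natDegree ≤ n) (y : ℂ) (hy : y ≠ 0) :
    (p.reflect n).eval y = y^n * p.eval y⁻¹ := by
  letI := invertibleOfNonzero (inv_ne_zero hy)
  have h2 := Polynomial.eval₂_reflect_mul_pow (RingHom.id ℂ) (y⁻¹) n p h
  rw [invOf_eq_inv, inv_inv] at h2
  simp only [eval₂_eq_eval_map, Polynomial.map_id] at h2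
  have hyn : (y⁻¹)^n ≠ 0 := pow_ne_zero n (inv_ne_zero hy)
  rw [← h2, mul_left_comm, ← mul_pow, mul_inv_cancel₀ hy, one_pow, mul_one]

lemma natDegree_reflect_le (p : Polynomial ℂ) (n : ℕ) (h : p.natDegree ≤ n) :
    (p.reflect n).natDegree ≤ n := by
  rw [Polynomial.natDegree_le_iff_coeff_eq_zero]
  intro N hN
  rw [Polynomial.coeff_reflect, Polynomial.revAt_eq_self_of_lt hN]
  exact Polynomial.coeff_eq_zero_of_natDegree_lt (lt_of_le_of_lt h hN)

lemma step1 (F P : Polynomial ℂ) (n : ℕ) (hdeg : F.natDegree = n)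
    (hroots : ∀ w : ℂ, F.eval w = 0 → ‖w‖ ≤ 1)
    (hP : P.natDegree ≤ n)
    (hle : ∀ z : ℂ, ‖z‖ = 1 → ‖P.eval z‖ ≤ ‖F.eval z‖) :
    (∀ z : ℂ, 1 ≤ ‖z‖ → ‖P.eval z‖ ≤ ‖F.eval z‖) ∧
      ‖P.coeff n‖ ≤ ‖F.coeff n‖ := by
  have hFne : F ≠ 0 := by
    intro h0
    have := hroots 2 (by simp [h0])
    norm_num at this
  have key : ∀ w : ℂ, ‖w‖ ≤ 1 →
      ‖(P.reflect n).eval w‖ ≤ ‖(F.reflect n).eval w‖ := by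
    apply maxmod n _ _ (natDegree_reflect_le F n hdeg.le)
    · intro x hx
      have hx0 : x ≠ 0 := by intro h; rw [h] at hx; simp at hx
      rw [reflect_eval P n hP x hx0, reflect_eval F n hdeg.le x hx0, norm_mul, norm_mul]
      apply mul_le_mul_of_nonneg_left _ (norm_nonneg _)
      apply hle
      rw [norm_inv, hx]; norm_num
    · intro w hw
      by_cases hw0 : w = 0
      · subst hw0
        rw [← Polynomial.coeff_zero_eq_eval_zero]
        have he : (F.reflect n).coeff 0 = F.coeff n := by
          rw [Polynomial.coeff_reflect, Polynomial.revAt_le (Nat.zero_le n), Nat.sub_zero]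
        rw [he, ← hdeg]
        exact mt Polynomial.leadingCoeff_eq_zero.mp hFne
      · rw [reflect_eval F n hdeg.le w hw0]
        intro h0
        rcases mul_eq_zero.mp h0 with h1 | h2
        · exact pow_ne_zero n hw0 h1
        · have := hroots w⁻¹ h2
          rw [norm_inv] at this
          have hwpos : 0 < ‖w‖ := norm_pos_iff.mpr hw0
          have : (1:ℝ) < (‖w‖)⁻¹ := by
            rw [lt_inv_comm₀ (by norm_num) hwpos]; simpa using hw
          linarith
  constructor
  · intro z hz
    have hz0 : z ≠ 0 := by intro h; rw [h] at hz; simp at hz; linarith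
    have hzi : ‖z⁻¹‖ ≤ 1 := by
      rw [norm_inv]
      exact inv_le_one_of_one_le₀ hz
    have hk := key z⁻¹ hzi
    rw [reflect_eval P n hP z⁻¹ (inv_ne_zero hz0), reflect_eval F n hdeg.le z⁻¹ (inv_ne_zero hz0),
      inv_inv, norm_mul, norm_mul] at hk
    have hpow : 0 < ‖(z⁻¹)^n‖ := norm_pos_iff.mpr (pow_ne_zero n (inv_ne_zero hz0))
    exact le_of_mul_le_mul_left hk hpow
  · have hk := key 0 (by simp)
    rw [← Polynomial.coeff_zero_eq_eval_zero, ← Polynomial.coeff_zero_eq_eval_zero] at hk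
    simpa [Polynomial.coeff_reflect, Polynomial.revAt_le (Nat.zero_le n)] using hk

lemma keyB (F P : Polynomial ℂ) (n : ℕ) (hdeg : F.natDegree = n)
    (hroots : ∀ w : ℂ, F.eval w = 0 → ‖w‖ ≤ 1)
    (hP : P.natDegree ≤ n)
    (hle : ∀ z : ℂ, ‖z‖ = 1 → ‖P.eval z‖ ≤ ‖F.eval z‖)
    (R r : ℝ) (hr : 1 ≤ r) (hRr : r < R)
    (z : ℂ) (hz : 1 ≤ ‖z‖) (φ : ℂ)
    (hφ : ‖φ‖ < ((R+1)/(r+1))^n) :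
    ‖P.eval ((R : ℂ) * z) + φ * P.eval ((r : ℂ) * z)‖ ≤
      ‖F.eval ((R : ℂ) * z) + φ * F.eval ((r : ℂ) * z)‖ := by
  by_contra hcon
  push_neg at hcon
  have hFne : F ≠ 0 := by
    intro h0
    have := hroots 2 (by simp [h0])
    norm_num at this
  obtain ⟨hext, hcoeff⟩ := step1 F P n hdeg hroots hP hle
  have hFn : F.coeff n ≠ 0 := by
    rw [← hdeg]
    exact mt Polynomial.leadingCoeff_eq_zero.mp hFne
  have habsRz : ‖(R:ℂ)*z‖ = R * ‖z‖ := by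
    rw [norm_mul, Complex.norm_real, Real.norm_eq_abs, abs_of_pos (by linarith : (0:ℝ) < R)]
  have hRz1 : 1 < ‖(R:ℂ)*z‖ := by
    rw [habsRz]; nlinarith
  have hFRz : F.eval ((R:ℂ)*z) ≠ 0 := by
    intro h0
    have := hroots _ h0
    linarith
  have hFA := lemA F hFne hroots R r hr hRr.le z hz
  rw [hdeg] at hFA
  set num := P.eval ((R:ℂ)*z) + φ * P.eval ((r:ℂ)*z) with hnum
  set den := F.eval ((R:ℂ)*z) + φ * F.eval ((r:ℂ)*z) with hden
  have hdne : den ≠ 0 := by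
    by_cases hFrz : F.eval ((r:ℂ)*z) = 0
    · rw [hden, hFrz, mul_zero, add_zero]; exact hFRz
    · intro h0
      have h1 : F.eval ((R:ℂ)*z) = -(φ * F.eval ((r:ℂ)*z)) := by
        rw [hden] at h0; linear_combination h0
      have h2 : ‖F.eval ((R:ℂ)*z)‖ = ‖φ‖ * ‖F.eval ((r:ℂ)*z)‖ := by
        rw [h1, norm_neg, norm_mul]
      have h3 : 0 < ‖F.eval ((r:ℂ)*z)‖ := norm_pos_iff.mpr hFrz
      nlinarith
  set lam : ℂ := num / den with hlam
  have hlam1 : 1 < ‖lam‖ := by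
    rw [hlam, norm_div, lt_div_iff₀ (norm_pos_iff.mpr hdne), one_mul]
    exact hcon
  set G : Polynomial ℂ := P - C lam * F with hG
  have hGeval : ∀ x : ℂ, G.eval x = P.eval x - lam * F.eval x := by
    intro x; rw [hG]; simp
  have hGn : G.coeff n ≠ 0 := by
    rw [hG, Polynomial.coeff_sub, Polynomial.coeff_C_mul]
    intro h0
    have h1 : P.coeff n = lam * F.coeff n := by linear_combination h0
    have h2 : ‖P.coeff n‖ = ‖lam‖ * ‖F.coeff n‖ := by
      rw [h1, norm_mul]
    have h3 : 0 < ‖F.coeff n‖ := norm_pos_iff.mpr hFn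
    nlinarith
  have hGne : G ≠ 0 := fun h0 => hGn (by simp [h0])
  have hGdeg : G.natDegree = n := by
    apply le_antisymm
    · rw [hG]
      apply le_trans (Polynomial.natDegree_sub_le _ _)
      simp only [max_le_iff]
      exact ⟨hP, le_trans (Polynomial.natDegree_C_mul_le _ _) hdeg.le⟩
    · exact Polynomial.le_natDegree_of_ne_zero hGn
  have hGroots : ∀ w : ℂ, G.eval w = 0 → ‖w‖ ≤ 1 := by
    intro w hw
    by_contra hwa
    push_neg at hwa
    have hFw : F.eval w ≠ 0 := by
      intro h0; exact absurd (hroots w h0) (not_le.mpr hwa)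
    have h1 : P.eval w = lam * F.eval w := by
      rw [hGeval] at hw; linear_combination hw
    have h2 := hext w hwa.le
    have h3 : ‖P.eval w‖ = ‖lam‖ * ‖F.eval w‖ := by
      rw [h1, norm_mul]
    have h4 : 0 < ‖F.eval w‖ := norm_pos_iff.mpr hFw
    nlinarith
  have hA := lemA G hGne hGroots R r hr hRr.le z hz
  rw [hGdeg] at hA
  have hzero : G.eval ((R:ℂ)*z) + φ * G.eval ((r:ℂ)*z) = 0 := by
    rw [hGeval, hGeval]
    have : num - lam * den = 0 := by
      rw [hlam, div_mul_cancel₀ _ hdne]; ring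
    rw [hnum, hden] at this
    linear_combination this
  have hGRz : G.eval ((R:ℂ)*z) ≠ 0 := by
    intro h0
    have := hGroots _ h0
    linarith
  have h1 : G.eval ((R:ℂ)*z) = -(φ * G.eval ((r:ℂ)*z)) := by linear_combination hzero
  have h2 : ‖G.eval ((R:ℂ)*z)‖ = ‖φ‖ * ‖G.eval ((r:ℂ)*z)‖ := by
    rw [h1, norm_neg, norm_mul]
  by_cases hGrz : G.eval ((r:ℂ)*z) = 0
  · rw [hGrz, norm_zero, mul_zero] at h2
    exact hGRz (norm_eq_zero.mp h2)
  · have h3 : 0 < ‖G.eval ((r:ℂ)*z)‖ := norm_pos_iff.mpr hGrz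
    nlinarith [norm_pos_iff.mpr hGRz]

theorem stmt_15 (F P : Polynomial ℂ) (n : ℕ) (hdeg : F.natDegree = n)
    (hroots : ∀ w : ℂ, F.eval w = 0 → ‖w‖ ≤ 1)
    (hP : P.natDegree ≤ n)
    (hle : ∀ z : ℂ, ‖z‖ = 1 → ‖P.eval z‖ ≤ ‖F.eval z‖)
    (R r : ℝ) (hr : 1 ≤ r) (hRr : r < R)
    (α β : ℂ) (hα : ‖α‖ ≤ 1) (hβ : ‖β‖ ≤ 1)
    (φ : ℂ) (hφ : φ = β * ((((R + 1) / (r + 1)) ^ n : ℝ) - ‖α‖) - α) :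
    ∀ z : ℂ, 1 ≤ ‖z‖ →
      ‖P.eval ((R : ℂ) * z) + φ * P.eval ((r : ℂ) * z)‖ ≤
        ‖F.eval ((R : ℂ) * z) + φ * F.eval ((r : ℂ) * z)‖ := by
  intro z hz
  set k : ℝ := (R + 1) / (r + 1) with hk
  have hk1 : (1:ℝ) ≤ k := by
    rw [hk, le_div_iff₀ (by linarith : (0:ℝ) < r + 1)]
    linarith
  have hkn1 : (1:ℝ) ≤ k ^ n := one_le_pow₀ hk1
  have hφle : ‖φ‖ ≤ k ^ n := by
    rw [hφ]
    calc ‖β * (((k ^ n : ℝ) : ℂ) - (‖α‖ : ℂ)) - α‖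
        ≤ ‖β * (((k ^ n : ℝ) : ℂ) - (‖α‖ : ℂ))‖ + ‖α‖ := by
          apply norm_sub_le
      _ = ‖β‖ * ‖((k ^ n : ℝ) : ℂ) - (‖α‖ : ℂ)‖ + ‖α‖ := by
          rw [norm_mul]
      _ ≤ 1 * ‖((k ^ n : ℝ) : ℂ) - (‖α‖ : ℂ)‖ + ‖α‖ := by
          apply add_le_add_left
          exact mul_le_mul_of_nonneg_right hβ (norm_nonneg _)
      _ = ‖((k ^ n - ‖α‖ : ℝ) : ℂ)‖ + ‖α‖ := by
          push_cast; rw [one_mul]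
      _ = (k ^ n - ‖α‖) + ‖α‖ := by
          rw [Complex.norm_real, Real.norm_eq_abs, _root_.abs_of_nonneg (by linarith : (0:ℝ) ≤ k ^ n - ‖α‖)]
      _ = k ^ n := by ring
  -- closed condition
  set S : Set ℂ := {ψ : ℂ | ‖P.eval ((R : ℂ) * z) + ψ * P.eval ((r : ℂ) * z)‖ ≤
    ‖F.eval ((R : ℂ) * z) + ψ * F.eval ((r : ℂ) * z)‖} with hS
  have hclosed : IsClosed S := by
    apply isClosed_le
    · exact continuous_norm.comp (continuous_const.add (continuous_id.mul continuous_const))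
    · exact continuous_norm.comp (continuous_const.add (continuous_id.mul continuous_const))
  have hball : ball (0:ℂ) (k ^ n) ⊆ S := by
    intro ψ hψ
    have : ‖ψ‖ < k ^ n := by
      simpa [Complex.dist_eq] using mem_ball.mp hψ
    exact keyB F P n hdeg hroots hP hle R r hr hRr z hz ψ this
  have hcball : closedBall (0:ℂ) (k ^ n) ⊆ S := by
    rw [← closure_ball (0:ℂ) (by positivity : (k:ℝ) ^ n ≠ 0)]
    exact closure_minimal hball hclosed
  have : φ ∈ closedBall (0:ℂ) (k ^ n) := by
    rw [mem_closedBall]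
    simpa [Complex.dist_eq] using hφle
  exact hcball this
end

section
/- Let P be a complex polynomial of degree n with no zeros in the open unit disk, m = min_{|z|=1}|P(z)|, and P* its conjugate-reverse polynomial. For R > r ≥ 1, α, β ∈ ℂ with |α| ≤ 1, |β| ≤ 1, and φ = β(((R+1)/(r+1))^n − |α|) − α, for every |z| = 1: |P(Rz) + φ P(rz)| ≤ |P*(Rz) + φ P*(rz)| − (|R^n + φ r^n| − |1 + φ|) · m. -/
open Polynomial Complex

noncomputable def Complex.abs : AbsoluteValue ℂ ℝ where
  toFun z := ‖z‖
  map_mul' := norm_mul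
  nonneg' := norm_nonneg
  eq_zero' _ := norm_eq_zero
  add_le' := norm_add_le

@[simp] lemma Complex.abs_apply (z : ℂ) : Complex.abs z = ‖z‖ := rfl
lemma Complex.norm_eq_abs (z : ℂ) : ‖z‖ = Complex.abs z := rfl
lemma Complex.sq_abs (z : ℂ) : Complex.abs z ^ 2 = Complex.normSq z := Complex.sq_norm z
lemma Complex.abs_conj (z : ℂ) : Complex.abs ((starRingEnd ℂ) z) = Complex.abs z :=
  Complex.norm_conj z
lemma Complex.abs_ofReal (r : ℝ) : Complex.abs (r : ℂ) = |r| := Complex.norm_real r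
lemma Complex.abs_re_le_abs (z : ℂ) : |z.re| ≤ Complex.abs z := Complex.abs_re_le_norm z

lemma sq_abs_sub' (t : ℝ) (z w : ℂ) (hz : Complex.abs z = 1) :
    Complex.abs ((t:ℂ) * z - w) ^ 2
      = t ^ 2 + Complex.abs w ^ 2 - 2 * t * (z * (starRingEnd ℂ) w).re := by
  rw [Complex.sq_abs, Complex.sq_abs, Complex.normSq_sub]
  have h1 : Complex.normSq ((t:ℂ) * z) = t ^ 2 := by
    rw [Complex.normSq_mul, Complex.normSq_ofReal, ← Complex.sq_abs, hz]
    ring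
  have h2 : ((t:ℂ) * z * (starRingEnd ℂ) w).re = t * (z * (starRingEnd ℂ) w).re := by
    rw [mul_assoc, Complex.re_ofReal_mul]
  rw [h1, h2, ← Complex.sq_abs]
  ring

lemma factor_le' {R r : ℝ} (hr : 1 ≤ r) (hRr : r < R) {z w : ℂ}
    (hz : Complex.abs z = 1) (hw : Complex.abs w ≤ 1) :
    (R + 1) * Complex.abs ((r:ℂ) * z - w) ≤ (r + 1) * Complex.abs ((R:ℂ) * z - w) := by
  have h1 : (0:ℝ) ≤ (R+1) * Complex.abs ((r:ℂ)*z - w) :=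
    mul_nonneg (by linarith) (Complex.abs.nonneg _)
  have h2 : (0:ℝ) ≤ (r+1) * Complex.abs ((R:ℂ)*z - w) :=
    mul_nonneg (by linarith) (Complex.abs.nonneg _)
  rw [← pow_le_pow_iff_left₀ h1 h2 two_ne_zero]
  rw [mul_pow, mul_pow, sq_abs_sub' r z w hz, sq_abs_sub' R z w hz]
  set s := Complex.abs w with hs
  set u := (z * (starRingEnd ℂ) w).re with hu
  have hus : |u| ≤ s := by
    calc |u| ≤ Complex.abs (z * (starRingEnd ℂ) w) := Complex.abs_re_le_abs _
    _ = s := by rw [map_mul, hz, one_mul, Complex.abs_conj]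
  have hs0 : (0:ℝ) ≤ s := Complex.abs.nonneg w
  have hu1 : -s ≤ u := neg_le_of_abs_le hus
  have hrR : (1:ℝ) ≤ r * R := by nlinarith
  nlinarith [mul_nonneg (mul_nonneg (sub_nonneg.mpr hRr.le) (sub_nonneg.mpr hrR))
      (by linarith : (0:ℝ) ≤ u + s),
    mul_nonneg (mul_nonneg (sub_nonneg.mpr hRr.le) (by linarith : (0:ℝ) ≤ 1 - s))
      (by nlinarith : (0:ℝ) ≤ (r+1)*(R+s)+(R+1)*(r+s))]

lemma factor_lt' {R r : ℝ} (hr : 1 ≤ r) (hRr : r < R) {z w : ℂ}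
    (hz : Complex.abs z = 1) (hw : Complex.abs w ≤ 1) (hwz : w ≠ -z) :
    (R + 1) * Complex.abs ((r:ℂ) * z - w) < (r + 1) * Complex.abs ((R:ℂ) * z - w) := by
  have h1 : (0:ℝ) ≤ (R+1) * Complex.abs ((r:ℂ)*z - w) :=
    mul_nonneg (by linarith) (Complex.abs.nonneg _)
  have h2 : (0:ℝ) ≤ (r+1) * Complex.abs ((R:ℂ)*z - w) :=
    mul_nonneg (by linarith) (Complex.abs.nonneg _)
  rw [← pow_lt_pow_iff_left₀ h1 h2 two_ne_zero]
  rw [mul_pow, mul_pow, sq_abs_sub' r z w hz, sq_abs_sub' R z w hz]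
  have hus : |(z * (starRingEnd ℂ) w).re| ≤ Complex.abs w := by
    calc |(z * (starRingEnd ℂ) w).re| ≤ Complex.abs (z * (starRingEnd ℂ) w) :=
        Complex.abs_re_le_abs _
    _ = Complex.abs w := by rw [map_mul, hz, one_mul, Complex.abs_conj]
  set s := Complex.abs w with hs
  set u := (z * (starRingEnd ℂ) w).re with hu
  have hs0 : (0:ℝ) ≤ s := Complex.abs.nonneg w
  have hu1 : -s ≤ u := neg_le_of_abs_le hus
  have hrR : (1:ℝ) < r * R := by nlinarith
  have hkey : s < 1 ∨ -s < u := by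
    by_contra hcon
    push_neg at hcon
    obtain ⟨hs1, hu2⟩ := hcon
    have hs1' : s = 1 := le_antisymm hw hs1
    have hueq : u = -1 := by
      have := neg_le_of_abs_le hus
      nlinarith [le_of_abs_le hus]
    -- then z * conj w = -1, so w = -z
    apply hwz
    have habs : Complex.abs (z * (starRingEnd ℂ) w) = 1 := by
      rw [map_mul, hz, one_mul, Complex.abs_conj, ← hs, hs1']
    have hre : (z * (starRingEnd ℂ) w).re = -1 := hueq
    have : z * (starRingEnd ℂ) w = -1 := by
      have him := Complex.sq_abs (z * (starRingEnd ℂ) w)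
      rw [habs] at him
      have h3 : (z * (starRingEnd ℂ) w).im = 0 := by
        have := Complex.normSq_apply (z * (starRingEnd ℂ) w)
        nlinarith [this, him, hre]
      apply Complex.ext <;> simp [hre, h3]
    -- from z * conj w = -1 and |z| = 1 derive w = -z
    have hz0 : z ≠ 0 := by
      intro h; rw [h] at hz; simp at hz
    have hcw : (starRingEnd ℂ) w = -z⁻¹ := by
      field_simp at this ⊢
      linear_combination this
    have := congrArg (starRingEnd ℂ) hcw
    rw [Complex.conj_conj] at this
    rw [this]
    rw [map_neg, map_inv₀]
    rw [Complex.inv_def]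
    rw [Complex.normSq_conj, Complex.conj_conj]
    have : Complex.normSq z = 1 := by rw [← Complex.sq_abs, hz]; ring
    rw [this]
    simp
  rcases hkey with hcase | hcase
  · nlinarith [mul_nonneg (mul_nonneg (sub_nonneg.mpr hRr.le) (sub_nonneg.mpr hrR.le))
        (by linarith : (0:ℝ) ≤ u + s),
      mul_pos (mul_pos (sub_pos.mpr hRr) (by linarith : (0:ℝ) < 1 - s))
        (by nlinarith : (0:ℝ) < (r+1)*(R+s)+(R+1)*(r+s))]
  · nlinarith [mul_nonneg (mul_nonneg (sub_nonneg.mpr hRr.le) (by linarith : (0:ℝ) ≤ 1 - s))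
        (by nlinarith : (0:ℝ) ≤ (r+1)*(R+s)+(R+1)*(r+s)),
      mul_pos (mul_pos (sub_pos.mpr hRr) (sub_pos.mpr hrR)) (by linarith : (0:ℝ) < u + s)]

open Polynomial Complex

noncomputable def pstar (n : ℕ) (Q : Polynomial ℂ) : Polynomial ℂ :=
  Polynomial.reflect n (Q.map (starRingEnd ℂ))

lemma pstar_coeff (n : ℕ) (Q : Polynomial ℂ) (i : ℕ) :
    (pstar n Q).coeff i = (starRingEnd ℂ) (Q.coeff (Polynomial.revAt n i)) := by
  rw [pstar, Polynomial.coeff_reflect, Polynomial.coeff_map]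

lemma natDegree_pstar_le (n : ℕ) (Q : Polynomial ℂ) (hQ : Q.natDegree ≤ n) :
    (pstar n Q).natDegree ≤ n := by
  rw [Polynomial.natDegree_le_iff_coeff_eq_zero]
  intro N hN
  rw [pstar_coeff, Polynomial.revAt_eq_self_of_lt hN]
  rw [Polynomial.coeff_eq_zero_of_natDegree_lt (lt_of_le_of_lt hQ hN)]
  simp

lemma pstar_pstar (n : ℕ) (Q : Polynomial ℂ) (hQ : Q.natDegree ≤ n) :
    pstar n (pstar n Q) = Q := by
  ext i
  rw [pstar_coeff, pstar_coeff]
  rcases le_or_gt i n with h | h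
  · rw [Polynomial.revAt_invol, Complex.conj_conj]
  · rw [Polynomial.revAt_eq_self_of_lt h, Polynomial.revAt_eq_self_of_lt h, Complex.conj_conj]

lemma pstar_coeff_n (n : ℕ) (Q : Polynomial ℂ) :
    (pstar n Q).coeff n = (starRingEnd ℂ) (Q.coeff 0) := by
  rw [pstar_coeff, Polynomial.revAt_le (le_refl n), Nat.sub_self]

lemma pstar_sub_C (n : ℕ) (Q : Polynomial ℂ) (a : ℂ) :
    pstar n (Q - Polynomial.C a) = pstar n Q - Polynomial.C ((starRingEnd ℂ) a) * X ^ n := by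
  ext i
  rw [Polynomial.coeff_sub, pstar_coeff, pstar_coeff, Polynomial.coeff_sub]
  rw [Polynomial.coeff_C_mul, Polynomial.coeff_X_pow]
  rcases le_or_gt i n with h | h
  · rw [Polynomial.revAt_le h]
    rcases eq_or_lt_of_le h with h' | h'
    · subst h'
      simp [Nat.sub_self, Polynomial.coeff_C]
    · have : n - i ≠ 0 := Nat.sub_ne_zero_of_lt h'
      rw [Polynomial.coeff_C, if_neg this]
      have : ¬ (i = n) := Nat.ne_of_lt h'
      rw [if_neg this]
      ring_nf
  · rw [Polynomial.revAt_eq_self_of_lt h]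
    have h0 : i ≠ 0 := by omega
    have h1 : ¬ (i = n) := by omega
    rw [Polynomial.coeff_C, if_neg h0, if_neg h1]
    ring_nf

lemma eval_map_conj (Q : Polynomial ℂ) (y : ℂ) :
    (Q.map (starRingEnd ℂ)).eval y = (starRingEnd ℂ) (Q.eval ((starRingEnd ℂ) y)) := by
  rw [Polynomial.eval_map]
  have : y = (starRingEnd ℂ) ((starRingEnd ℂ) y) := (Complex.conj_conj y).symm
  rw [this, Polynomial.eval₂_hom, Complex.conj_conj]

lemma eval_reflect_s18 (N : ℕ) (p : Polynomial ℂ) (hp : p.natDegree ≤ N) {x : ℂ} (hx : x ≠ 0) :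
    (Polynomial.reflect N p).eval x = x ^ N * p.eval x⁻¹ := by
  letI := invertibleOfNonzero (inv_ne_zero hx)
  have := Polynomial.eval₂_reflect_mul_pow (RingHom.id ℂ) x⁻¹ N p hp
  rw [Polynomial.eval₂_eq_eval_map, Polynomial.eval₂_eq_eval_map, Polynomial.map_id] at this
  rw [invOf_eq_inv, inv_inv] at this
  simp only [Polynomial.map_id] at this
  have hinv : (x⁻¹:ℂ)^N * x^N = 1 := by
    rw [← mul_pow, inv_mul_cancel₀ hx, one_pow]
  calc (Polynomial.reflect N p).eval x
      = (Polynomial.reflect N p).eval x * ((x⁻¹)^N * x^N) := by rw [hinv, mul_one]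
    _ = ((Polynomial.reflect N p).eval x * (x⁻¹)^N) * x^N := by ring
    _ = p.eval x⁻¹ * x ^ N := by rw [this]
    _ = x ^ N * p.eval x⁻¹ := by ring

lemma pstar_eval (n : ℕ) (Q : Polynomial ℂ) (hQ : Q.natDegree ≤ n) {x : ℂ} (hx : x ≠ 0) :
    (pstar n Q).eval x = x ^ n * (starRingEnd ℂ) (Q.eval (((starRingEnd ℂ) x)⁻¹)) := by
  rw [pstar, eval_reflect_s18 n _ (le_trans Polynomial.natDegree_map_le hQ) hx, eval_map_conj]
  rw [map_inv₀]

lemma abs_pstar_eval (n : ℕ) (Q : Polynomial ℂ) (hQ : Q.natDegree ≤ n) {x : ℂ} (hx : x ≠ 0) :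
    Complex.abs ((pstar n Q).eval x)
      = Complex.abs x ^ n * Complex.abs (Q.eval (((starRingEnd ℂ) x)⁻¹)) := by
  rw [pstar_eval n Q hQ hx, map_mul, map_pow, Complex.abs_conj]

open Polynomial Complex

lemma abs_eval_eq (h : Polynomial ℂ) (hh : h ≠ 0) (x : ℂ) :
    Complex.abs (h.eval x)
      = Complex.abs h.leadingCoeff * ((h.roots.map fun w => Complex.abs (x - w)).prod) := by
  conv_lhs => rw [(IsAlgClosed.splits h).eq_prod_roots]
  rw [Polynomial.eval_mul, Polynomial.eval_C, map_mul]
  congr 1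
  rw [Polynomial.eval_multiset_prod, Multiset.map_map, map_multiset_prod, Multiset.map_map]
  apply congrArg
  apply Multiset.map_congr rfl
  intro w _
  simp

lemma card_roots_eq (h : Polynomial ℂ) : h.roots.card = h.natDegree :=
  Polynomial.splits_iff_card_roots.mp (IsAlgClosed.splits h)

lemma eval_big_ne_zero {T : ℝ} (hT : 1 < T) {z : ℂ} (hz : Complex.abs z = 1)
    (h : Polynomial ℂ) (h0 : h ≠ 0) (hroots : ∀ w ∈ h.roots, Complex.abs w ≤ 1) :
    h.eval ((T:ℂ) * z) ≠ 0 := by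
  intro hcon
  have : (T:ℂ) * z ∈ h.roots := Polynomial.mem_roots'.mpr ⟨h0, hcon⟩
  have := hroots _ this
  rw [map_mul, Complex.abs_ofReal, hz, mul_one] at this
  rw [abs_of_pos (by linarith : (0:ℝ) < T)] at this
  linarith

lemma prod_bound {R r : ℝ} (hr : 1 ≤ r) (hRr : r < R) {z : ℂ} (hz : Complex.abs z = 1)
    {n : ℕ} (h : Polynomial ℂ) (hdeg : h.natDegree = n) (h0 : h ≠ 0)
    (hroots : ∀ w ∈ h.roots, Complex.abs w ≤ 1) :
    (R+1)^n * Complex.abs (h.eval ((r:ℂ) * z)) ≤ (r+1)^n * Complex.abs (h.eval ((R:ℂ) * z)) := by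
  rw [abs_eval_eq h h0, abs_eval_eq h h0]
  have hcard : h.roots.card = n := by rw [card_roots_eq, hdeg]
  have key : (h.roots.map fun w => (R+1) * Complex.abs ((r:ℂ) * z - w)).prod
      ≤ (h.roots.map fun w => (r+1) * Complex.abs ((R:ℂ) * z - w)).prod := by
    apply Multiset.prod_map_le_prod_map₀
    · intro w hw
      exact mul_nonneg (by linarith) (Complex.abs.nonneg _)
    · intro w hw
      exact factor_le' hr hRr hz (hroots w hw)
  rw [Multiset.prod_map_mul, Multiset.prod_map_mul] at key
  simp only [Multiset.map_const', Multiset.prod_replicate, hcard] at key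
  calc (R+1)^n * (Complex.abs h.leadingCoeff * (h.roots.map fun w => Complex.abs ((r:ℂ)*z - w)).prod)
      = Complex.abs h.leadingCoeff * ((R+1)^n * (h.roots.map fun w => Complex.abs ((r:ℂ)*z - w)).prod) := by ring
    _ ≤ Complex.abs h.leadingCoeff * ((r+1)^n * (h.roots.map fun w => Complex.abs ((R:ℂ)*z - w)).prod) :=
        mul_le_mul_of_nonneg_left key (Complex.abs.nonneg _)
    _ = (r+1)^n * (Complex.abs h.leadingCoeff * (h.roots.map fun w => Complex.abs ((R:ℂ)*z - w)).prod) := by ring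

lemma prod_bound_strict {R r : ℝ} (hr : 1 ≤ r) (hRr : r < R) {z : ℂ} (hz : Complex.abs z = 1)
    {n : ℕ} (h : Polynomial ℂ) (hdeg : h.natDegree = n) (h0 : h ≠ 0)
    (hroots : ∀ w ∈ h.roots, Complex.abs w ≤ 1)
    (hrz : h.eval ((r:ℂ) * z) ≠ 0)
    {w₀ : ℂ} (hw₀ : w₀ ∈ h.roots) (hw₀z : w₀ ≠ -z) :
    (R+1)^n * Complex.abs (h.eval ((r:ℂ) * z)) < (r+1)^n * Complex.abs (h.eval ((R:ℂ) * z)) := by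
  obtain ⟨M, hM⟩ := Multiset.exists_cons_of_mem hw₀
  have hcard : h.roots.card = n := by rw [card_roots_eq, hdeg]
  have hpos : ∀ w ∈ h.roots, 0 < Complex.abs ((r:ℂ) * z - w) := by
    intro w hw
    rcases eq_or_ne ((r:ℂ) * z) w with he | hne
    · exfalso
      apply hrz
      have : w ∈ h.roots := hw
      rw [Polynomial.mem_roots'] at this
      rw [he]
      exact this.2
    · simpa [sub_eq_zero] using hne
  rw [abs_eval_eq h h0, abs_eval_eq h h0]
  have hlc : 0 < Complex.abs h.leadingCoeff := by
    simpa using (Polynomial.leadingCoeff_ne_zero.mpr h0)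
  -- rewrite prods with constants inside
  have e1 : (R+1)^n * (h.roots.map fun w => Complex.abs ((r:ℂ)*z - w)).prod
      = (h.roots.map fun w => (R+1) * Complex.abs ((r:ℂ)*z - w)).prod := by
    rw [Multiset.prod_map_mul]
    simp only [Multiset.map_const', Multiset.prod_replicate, hcard]
  have e2 : (r+1)^n * (h.roots.map fun w => Complex.abs ((R:ℂ)*z - w)).prod
      = (h.roots.map fun w => (r+1) * Complex.abs ((R:ℂ)*z - w)).prod := by
    rw [Multiset.prod_map_mul]
    simp only [Multiset.map_const', Multiset.prod_replicate, hcard]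
  have hkey : (h.roots.map fun w => (R+1) * Complex.abs ((r:ℂ)*z - w)).prod
      < (h.roots.map fun w => (r+1) * Complex.abs ((R:ℂ)*z - w)).prod := by
    rw [hM, Multiset.map_cons, Multiset.map_cons, Multiset.prod_cons, Multiset.prod_cons]
    have hrest : (M.map fun w => (R+1) * Complex.abs ((r:ℂ)*z - w)).prod
        ≤ (M.map fun w => (r+1) * Complex.abs ((R:ℂ)*z - w)).prod := by
      apply Multiset.prod_map_le_prod_map₀
      · intro w hw
        exact mul_nonneg (by linarith) (Complex.abs.nonneg _)
      · intro w hw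
        exact factor_le' hr hRr hz (hroots w (hM ▸ Multiset.mem_cons_of_mem hw))
    have hrestpos : 0 < (M.map fun w => (R+1) * Complex.abs ((r:ℂ)*z - w)).prod := by
      apply Multiset.prod_pos
      intro a ha
      obtain ⟨w, hw, rfl⟩ := Multiset.mem_map.mp ha
      exact mul_pos (by linarith) (hpos w (hM ▸ Multiset.mem_cons_of_mem hw))
    have hhead : (R+1) * Complex.abs ((r:ℂ)*z - w₀) < (r+1) * Complex.abs ((R:ℂ)*z - w₀) :=
      factor_lt' hr hRr hz (hroots w₀ hw₀) hw₀z
    have hheadpos : 0 ≤ (R+1) * Complex.abs ((r:ℂ)*z - w₀) :=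
      mul_nonneg (by linarith) (Complex.abs.nonneg _)
    calc (R+1) * Complex.abs ((r:ℂ)*z - w₀) * (M.map fun w => (R+1) * Complex.abs ((r:ℂ)*z - w)).prod
        < (r+1) * Complex.abs ((R:ℂ)*z - w₀) * (M.map fun w => (R+1) * Complex.abs ((r:ℂ)*z - w)).prod := by
          exact mul_lt_mul_of_pos_right hhead hrestpos
      _ ≤ (r+1) * Complex.abs ((R:ℂ)*z - w₀) * (M.map fun w => (r+1) * Complex.abs ((R:ℂ)*z - w)).prod := by
          apply mul_le_mul_of_nonneg_left hrest
          exact le_trans hheadpos hhead.le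
  calc (R+1)^n * (Complex.abs h.leadingCoeff * (h.roots.map fun w => Complex.abs ((r:ℂ)*z - w)).prod)
      = Complex.abs h.leadingCoeff * ((R+1)^n * (h.roots.map fun w => Complex.abs ((r:ℂ)*z - w)).prod) := by ring
    _ < Complex.abs h.leadingCoeff * ((r+1)^n * (h.roots.map fun w => Complex.abs ((R:ℂ)*z - w)).prod) := by
        apply mul_lt_mul_of_pos_left _ hlc
        rw [e1, e2]; exact hkey
    _ = (r+1)^n * (Complex.abs h.leadingCoeff * (h.roots.map fun w => Complex.abs ((R:ℂ)*z - w)).prod) := by ring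
lemma key_nonvanish {R r : ℝ} (hr : 1 ≤ r) (hRr : r < R) {z : ℂ} (hz : Complex.abs z = 1)
    {n : ℕ} (hn1 : 1 ≤ n) (h : Polynomial ℂ) (hdeg : h.natDegree = n) (h0 : h ≠ 0)
    (hroots : ∀ w ∈ h.roots, Complex.abs w ≤ 1)
    {α φ : ℂ} (hα : Complex.abs α ≤ 1)
    (hφα : Complex.abs (φ + α) ≤ ((R+1)/(r+1))^n - Complex.abs α)
    (hval : h.eval ((R:ℂ) * z) + φ * h.eval ((r:ℂ) * z) = 0) :
    h = Polynomial.C h.leadingCoeff * (X + Polynomial.C z) ^ n := by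
  have hR1 : (1:ℝ) < R := lt_of_le_of_lt hr hRr
  have hRz : h.eval ((R:ℂ) * z) ≠ 0 := eval_big_ne_zero hR1 hz h h0 hroots
  by_cases hrz : h.eval ((r:ℂ) * z) = 0
  · exfalso
    apply hRz
    rw [hrz, mul_zero, add_zero] at hval
    exact hval
  · -- show all roots are -z
    have hallz : ∀ w ∈ h.roots, w = -z := by
      by_contra hcon
      push_neg at hcon
      obtain ⟨w₀, hw₀, hw₀z⟩ := hcon
      have hstrict := prod_bound_strict hr hRr hz h hdeg h0 hroots hrz hw₀ hw₀z
      -- division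
      have hr1p : (0:ℝ) < (r+1)^n := by positivity
      have hK : ((R+1)/(r+1))^n * Complex.abs (h.eval ((r:ℂ)*z)) < Complex.abs (h.eval ((R:ℂ)*z)) := by
        rw [div_pow, div_mul_eq_mul_div, div_lt_iff₀ hr1p]
        calc (R+1)^n * Complex.abs (h.eval ((r:ℂ)*z))
            < (r+1)^n * Complex.abs (h.eval ((R:ℂ)*z)) := hstrict
          _ = Complex.abs (h.eval ((R:ℂ)*z)) * (r+1)^n := by ring
      set A := h.eval ((R:ℂ)*z)
      set B := h.eval ((r:ℂ)*z)
      have htri1 : Complex.abs A - Complex.abs α * Complex.abs B ≤ Complex.abs (A - α * B) := by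
        calc Complex.abs A - Complex.abs α * Complex.abs B
            = Complex.abs A - Complex.abs (α * B) := by rw [map_mul]
          _ ≤ Complex.abs (A - α * B) := Complex.abs.le_sub A (α * B)
      have htri2 : Complex.abs (A - α * B) - Complex.abs ((φ + α) * B) ≤ Complex.abs (A + φ * B) := by
        have : A + φ * B = (A - α * B) + (φ + α) * B := by ring
        rw [this]
        have h1 := Complex.abs.le_sub (A - α*B) (-((φ+α)*B))
        rw [sub_neg_eq_add, Complex.abs.map_neg] at h1
        linarith
      have hB0 : 0 < Complex.abs B := by simpa using hrz
      have hφB : Complex.abs ((φ + α) * B) ≤ (((R+1)/(r+1))^n - Complex.abs α) * Complex.abs B := by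
        rw [map_mul]
        exact mul_le_mul_of_nonneg_right hφα (Complex.abs.nonneg _)
      rw [hval, map_zero] at htri2
      nlinarith [Complex.abs.nonneg B, Complex.abs.nonneg α]
    -- conclude h = C c * (X + C z)^n
    have hcard : h.roots.card = n := by rw [card_roots_eq, hdeg]
    have hrep : h.roots = Multiset.replicate n (-z) :=
      Multiset.eq_replicate.mpr ⟨hcard, hallz⟩
    conv_lhs => rw [(IsAlgClosed.splits h).eq_prod_roots]
    congr 1
    rw [hrep, Multiset.map_replicate, Multiset.prod_replicate]
    congr 1
    rw [map_neg, sub_neg_eq_add]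
lemma pstar_sub (n : ℕ) (f g : Polynomial ℂ) : pstar n (f - g) = pstar n f - pstar n g := by
  ext i
  simp [pstar_coeff, Polynomial.coeff_sub, map_sub]

lemma pstar_C_mul (n : ℕ) (a : ℂ) (f : Polynomial ℂ) :
    pstar n (Polynomial.C a * f) = Polynomial.C ((starRingEnd ℂ) a) * pstar n f := by
  ext i
  simp [pstar_coeff, Polynomial.coeff_C_mul, map_mul]

lemma natDegree_pow_linear (z : ℂ) (n : ℕ) : ((X + Polynomial.C z) ^ n).natDegree = n := by
  rw [(Polynomial.monic_X_add_C z).natDegree_pow, Polynomial.natDegree_X_add_C, mul_one]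

lemma pstar_pow_linear (n : ℕ) {z : ℂ} (hz : Complex.abs z = 1) :
    pstar n ((X + Polynomial.C z) ^ n)
      = Polynomial.C (((starRingEnd ℂ) z) ^ n) * (X + Polynomial.C z) ^ n := by
  have hz1 : (starRingEnd ℂ) z * z = 1 := by
    rw [mul_comm, Complex.mul_conj]
    norm_cast
    rw [← Complex.sq_abs, hz, one_pow]
  ext i
  rw [pstar_coeff, Polynomial.coeff_C_mul]
  rcases le_or_gt i n with hi | hi
  · rw [Polynomial.revAt_le hi, Polynomial.coeff_X_add_C_pow, Polynomial.coeff_X_add_C_pow]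
    rw [Nat.sub_sub_self hi, Nat.choose_symm hi, map_mul, map_pow]
    have hpow : ((starRingEnd ℂ) z) ^ n * z ^ (n - i) = ((starRingEnd ℂ) z) ^ i := by
      have hsplit : n = i + (n - i) := (Nat.add_sub_cancel' hi).symm
      calc ((starRingEnd ℂ) z) ^ n * z ^ (n - i)
          = ((starRingEnd ℂ) z) ^ (i + (n-i)) * z ^ (n - i) := by rw [← hsplit]
        _ = ((starRingEnd ℂ) z) ^ i * (((starRingEnd ℂ) z) * z) ^ (n-i) := by
            rw [pow_add, mul_pow]; ring
        _ = ((starRingEnd ℂ) z) ^ i := by rw [hz1, one_pow, mul_one]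
    rw [map_natCast]
    calc ((starRingEnd ℂ) z) ^ i * ((n.choose i : ℂ)) 
        = ((starRingEnd ℂ) z) ^ n * z ^ (n-i) * (n.choose i : ℂ) := by rw [hpow]
      _ = ((starRingEnd ℂ) z) ^ n * (z ^ (n-i) * (n.choose i : ℂ)) := by ring
  · rw [Polynomial.revAt_eq_self_of_lt hi]
    have hd : ((X + Polynomial.C z) ^ n).natDegree < i := by
      rw [natDegree_pow_linear]; exact hi
    rw [Polynomial.coeff_eq_zero_of_natDegree_lt hd]
    simp

lemma roots_pstar_le {n : ℕ} (Q : Polynomial ℂ) (hdeg : Q.natDegree = n)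
    (hQnz : ∀ v : ℂ, Complex.abs v < 1 → Q.eval v ≠ 0) :
    ∀ w ∈ (pstar n Q).roots, Complex.abs w ≤ 1 := by
  intro w hw
  by_contra hcon
  push_neg at hcon
  have hw0 : w ≠ 0 := by
    intro h; rw [h] at hcon; rw [map_zero] at hcon; linarith
  have hroot : (pstar n Q).eval w = 0 := (Polynomial.mem_roots'.mp hw).2
  rw [pstar_eval n Q (le_of_eq hdeg) hw0] at hroot
  have h1 : Complex.abs (((starRingEnd ℂ) w)⁻¹) < 1 := by
    rw [map_inv₀, Complex.abs_conj]
    rw [inv_lt_one_iff₀]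
    right; exact hcon
  have h2 : Q.eval (((starRingEnd ℂ) w)⁻¹) ≠ 0 := hQnz _ h1
  have h3 : (starRingEnd ℂ) (Q.eval (((starRingEnd ℂ) w)⁻¹)) ≠ 0 := by
    simpa using h2
  exact (mul_ne_zero (pow_ne_zero n hw0) h3) hroot

lemma natDegree_pstar_eq {n : ℕ} (Q : Polynomial ℂ) (hdeg : Q.natDegree = n)
    (hQ0 : Q.coeff 0 ≠ 0) : (pstar n Q).natDegree = n := by
  have hle : (pstar n Q).natDegree ≤ n := natDegree_pstar_le n Q (le_of_eq hdeg)
  have hne : (pstar n Q).coeff n ≠ 0 := by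
    rw [pstar_coeff_n]
    simpa using hQ0
  exact le_antisymm hle (Polynomial.le_natDegree_of_ne_zero hne)

lemma pstar_ne_zero {n : ℕ} (Q : Polynomial ℂ) (hQ0 : Q.coeff 0 ≠ 0) : pstar n Q ≠ 0 := by
  intro h
  apply hQ0
  have := pstar_coeff_n n Q
  rw [h] at this
  simp at this
  simpa using this.symm

lemma abs_lead_le_abs_coeff0 {n : ℕ} (Q : Polynomial ℂ) (hdeg : Q.natDegree = n) (h0 : Q ≠ 0)
    (hroots : ∀ w ∈ Q.roots, 1 ≤ Complex.abs w) :
    Complex.abs Q.leadingCoeff ≤ Complex.abs (Q.coeff 0) := by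
  rw [Polynomial.coeff_zero_eq_eval_zero, abs_eval_eq Q h0 0]
  have h1 : (1:ℝ) ≤ ((Q.roots.map fun w => Complex.abs (0 - w)).prod) := by
    apply Multiset.one_le_prod
    intro a ha
    obtain ⟨w, hw, rfl⟩ := Multiset.mem_map.mp ha
    rw [zero_sub, Complex.abs.map_neg]
    exact hroots w hw
  nlinarith [Complex.abs.nonneg Q.leadingCoeff]

lemma factor_refl {x w : ℂ} (hx : 1 ≤ Complex.abs x) (hw : 1 ≤ Complex.abs w) :
    Complex.abs (x - w) ≤ Complex.abs x * Complex.abs (((starRingEnd ℂ) x)⁻¹ - w) := by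
  have hx0 : x ≠ 0 := by
    intro h; rw [h] at hx; simp at hx; linarith
  have hcx0 : (starRingEnd ℂ) x ≠ 0 := by simpa using hx0
  have he : Complex.abs x * Complex.abs (((starRingEnd ℂ) x)⁻¹ - w)
      = Complex.abs (1 - (starRingEnd ℂ) x * w) := by
    rw [← Complex.abs_conj x, ← map_mul]
    congr 1
    rw [mul_sub, mul_inv_cancel₀ hcx0]
  rw [he]
  have h1 : (0:ℝ) ≤ Complex.abs (x - w) := Complex.abs.nonneg _
  have h2 : (0:ℝ) ≤ Complex.abs (1 - (starRingEnd ℂ) x * w) := Complex.abs.nonneg _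
  rw [← pow_le_pow_iff_left₀ h1 h2 two_ne_zero]
  rw [Complex.sq_abs, Complex.sq_abs, Complex.normSq_sub, Complex.normSq_sub]
  have e1 : ((1:ℂ) * (starRingEnd ℂ) ((starRingEnd ℂ) x * w)).re = (x * (starRingEnd ℂ) w).re := by
    rw [one_mul, map_mul, Complex.conj_conj]
  rw [e1]
  have e2 : Complex.normSq ((starRingEnd ℂ) x * w) = Complex.normSq x * Complex.normSq w := by
    rw [Complex.normSq_mul, Complex.normSq_conj]
  rw [e2]
  have hX : (1:ℝ) ≤ Complex.normSq x := by
    rw [← Complex.sq_abs]; nlinarith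
  have hW : (1:ℝ) ≤ Complex.normSq w := by
    rw [← Complex.sq_abs]; nlinarith
  have h11 : Complex.normSq (1:ℂ) = 1 := by simp
  rw [h11]
  nlinarith

lemma eval_le_pstar_eval {n : ℕ} (Q : Polynomial ℂ) (hdeg : Q.natDegree = n) (h0 : Q ≠ 0)
    (hroots : ∀ w ∈ Q.roots, 1 ≤ Complex.abs w) {x : ℂ} (hx : 1 ≤ Complex.abs x) :
    Complex.abs (Q.eval x) ≤ Complex.abs ((pstar n Q).eval x) := by
  have hx0 : x ≠ 0 := by
    intro h; rw [h] at hx; simp at hx; linarith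
  rw [abs_pstar_eval n Q (le_of_eq hdeg) hx0]
  set y := ((starRingEnd ℂ) x)⁻¹ with hy
  rw [abs_eval_eq Q h0 x, abs_eval_eq Q h0 y]
  have hcard : Q.roots.card = n := by rw [card_roots_eq, hdeg]
  have key : (Q.roots.map fun w => Complex.abs (x - w)).prod
      ≤ (Q.roots.map fun w => Complex.abs x * Complex.abs (y - w)).prod := by
    apply Multiset.prod_map_le_prod_map₀
    · intro w hw; exact Complex.abs.nonneg _
    · intro w hw; exact factor_refl hx (hroots w hw)
  rw [Multiset.prod_map_mul] at key
  simp only [Multiset.map_const', Multiset.prod_replicate, hcard] at key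
  calc Complex.abs Q.leadingCoeff * (Q.roots.map fun w => Complex.abs (x - w)).prod
      ≤ Complex.abs Q.leadingCoeff * ((Complex.abs x) ^ n * (Q.roots.map fun w => Complex.abs (y - w)).prod) :=
        mul_le_mul_of_nonneg_left key (Complex.abs.nonneg _)
    _ = Complex.abs x ^ n * (Complex.abs Q.leadingCoeff * (Q.roots.map fun w => Complex.abs (y - w)).prod) := by ring
lemma pstar_eval_ne_zero {n : ℕ} (Q : Polynomial ℂ) (hdeg : Q.natDegree ≤ n)
    (hQnz : ∀ v : ℂ, Complex.abs v < 1 → Q.eval v ≠ 0) {w : ℂ} (hw : 1 < Complex.abs w) :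
    (pstar n Q).eval w ≠ 0 := by
  have hw0 : w ≠ 0 := by
    intro h; rw [h, map_zero] at hw; linarith
  rw [pstar_eval n Q hdeg hw0]
  have h1 : Complex.abs (((starRingEnd ℂ) w)⁻¹) < 1 := by
    rw [map_inv₀, Complex.abs_conj, inv_lt_one_iff₀]
    right; exact hw
  have h2 : (starRingEnd ℂ) (Q.eval (((starRingEnd ℂ) w)⁻¹)) ≠ 0 := by
    simpa using hQnz _ h1
  exact mul_ne_zero (pow_ne_zero n hw0) h2

lemma BL {R r : ℝ} (hr : 1 ≤ r) (hRr : r < R) {z : ℂ} (hz : Complex.abs z = 1)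
    {n : ℕ} (hn1 : 1 ≤ n) (Q : Polynomial ℂ) (hdeg : Q.natDegree = n)
    (hQnz : ∀ v : ℂ, Complex.abs v < 1 → Q.eval v ≠ 0)
    {α φ : ℂ} (hα : Complex.abs α ≤ 1)
    (hφα : Complex.abs (φ + α) ≤ ((R+1)/(r+1))^n - Complex.abs α) :
    Complex.abs (Q.eval ((R:ℂ)*z) + φ * Q.eval ((r:ℂ)*z))
      ≤ Complex.abs ((pstar n Q).eval ((R:ℂ)*z) + φ * (pstar n Q).eval ((r:ℂ)*z)) := by
  have hc0 : Q.coeff 0 ≠ 0 := by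
    rw [Polynomial.coeff_zero_eq_eval_zero]
    exact hQnz 0 (by simp)
  have hQ0 : Q ≠ 0 := fun hcon => hc0 (by rw [hcon]; simp)
  have hzroots : ∀ w ∈ Q.roots, 1 ≤ Complex.abs w := by
    intro w hw
    by_contra hcon
    push_neg at hcon
    exact hQnz w hcon (Polynomial.mem_roots'.mp hw).2
  have hQQs : pstar n (pstar n Q) = Q := pstar_pstar n Q hdeg.le
  by_cases hform : ∃ γ : ℂ, Q = Polynomial.C γ * (X + Polynomial.C z)^n
  · obtain ⟨γ, hγ⟩ := hform
    have hQs : pstar n Q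
        = Polynomial.C ((starRingEnd ℂ) γ * ((starRingEnd ℂ) z)^n) * (X + Polynomial.C z)^n := by
      rw [hγ, pstar_C_mul, pstar_pow_linear n hz, ← mul_assoc, ← Polynomial.C_mul]
    rw [hQs, hγ]
    simp only [Polynomial.eval_mul, Polynomial.eval_C, Polynomial.eval_pow,
      Polynomial.eval_add, Polynomial.eval_X]
    apply le_of_eq
    have e1 : ∀ c : ℂ, c * ((R:ℂ)*z + z)^n + φ * (c * ((r:ℂ)*z + z)^n)
        = c * (((R:ℂ)*z + z)^n + φ * ((r:ℂ)*z + z)^n) := by intro c; ring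
    rw [e1, e1, map_mul, map_mul]
    congr 1
    rw [map_mul, map_pow, Complex.abs_conj, Complex.abs_conj, hz, one_pow, mul_one]
  · have hQsform : ¬ ∃ γ : ℂ, pstar n Q = Polynomial.C γ * (X + Polynomial.C z)^n := by
      rintro ⟨γ, hγ⟩
      apply hform
      refine ⟨(starRingEnd ℂ) γ * ((starRingEnd ℂ) z)^n, ?_⟩
      rw [← hQQs, hγ, pstar_C_mul, pstar_pow_linear n hz, ← mul_assoc, ← Polynomial.C_mul]
    have hdegQs : (pstar n Q).natDegree = n := natDegree_pstar_eq Q hdeg hc0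
    have hQs0 : pstar n Q ≠ 0 := pstar_ne_zero Q hc0
    have hQsroots := roots_pstar_le Q hdeg hQnz
    set Aq := Q.eval ((R:ℂ)*z) + φ * Q.eval ((r:ℂ)*z) with hAq
    set Bq := (pstar n Q).eval ((R:ℂ)*z) + φ * (pstar n Q).eval ((r:ℂ)*z) with hBq
    have hBqne : Bq ≠ 0 := by
      intro h0B
      exact hQsform ⟨_, key_nonvanish hr hRr hz hn1 (pstar n Q) hdegQs hQs0 hQsroots hα hφα h0B⟩
    by_contra hgt
    push_neg at hgt
    set μ := Aq / Bq with hμdef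
    have hBqpos : 0 < Complex.abs Bq := by simpa using hBqne
    have hμ : 1 < Complex.abs μ := by
      rw [hμdef, map_div₀, lt_div_iff₀ hBqpos]
      linarith
    set h := Q - Polynomial.C μ * pstar n Q with hh
    have hQcoeffn : Q.coeff n = Q.leadingCoeff := by rw [← hdeg]; rfl
    have hlead : h.coeff n ≠ 0 := by
      rw [hh, Polynomial.coeff_sub, Polynomial.coeff_C_mul, pstar_coeff_n]
      intro hcon
      have heq : Q.coeff n = μ * (starRingEnd ℂ) (Q.coeff 0) := by
        linear_combination hcon
      have habs := congrArg Complex.abs heq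
      rw [map_mul, Complex.abs_conj] at habs
      have h1 : Complex.abs (Q.coeff n) ≤ Complex.abs (Q.coeff 0) := by
        rw [hQcoeffn]
        exact abs_lead_le_abs_coeff0 Q hdeg hQ0 hzroots
      have h2 : 0 < Complex.abs (Q.coeff 0) := by simpa using hc0
      nlinarith
    have hh0 : h ≠ 0 := fun hcon => hlead (by rw [hcon]; simp)
    have hhdeg : h.natDegree = n := by
      apply le_antisymm
      · apply le_trans (Polynomial.natDegree_sub_le _ _)
        apply max_le hdeg.le
        exact le_trans (Polynomial.natDegree_C_mul_le _ _) hdegQs.le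
      · exact Polynomial.le_natDegree_of_ne_zero hlead
    have hhroots : ∀ w ∈ h.roots, Complex.abs w ≤ 1 := by
      intro w hw
      by_contra hcon
      push_neg at hcon
      have hroot : h.eval w = 0 := (Polynomial.mem_roots'.mp hw).2
      rw [hh, Polynomial.eval_sub, Polynomial.eval_mul, Polynomial.eval_C, sub_eq_zero] at hroot
      have hQsne : (pstar n Q).eval w ≠ 0 := pstar_eval_ne_zero Q hdeg.le hQnz hcon
      have hQsabs : 0 < Complex.abs ((pstar n Q).eval w) := by simpa using hQsne
      have hle : Complex.abs (Q.eval w) ≤ Complex.abs ((pstar n Q).eval w) :=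
        eval_le_pstar_eval Q hdeg hQ0 hzroots hcon.le
      rw [hroot, map_mul] at hle
      nlinarith
    have hvalh : h.eval ((R:ℂ)*z) + φ * h.eval ((r:ℂ)*z) = 0 := by
      rw [hh]
      simp only [Polynomial.eval_sub, Polynomial.eval_mul, Polynomial.eval_C]
      have : Aq - μ * Bq = 0 := by
        rw [hμdef, div_mul_cancel₀ _ hBqne, sub_self]
      calc Q.eval ((R:ℂ)*z) - μ * (pstar n Q).eval ((R:ℂ)*z)
            + φ * (Q.eval ((r:ℂ)*z) - μ * (pstar n Q).eval ((r:ℂ)*z))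
          = Aq - μ * Bq := by rw [hAq, hBq]; ring
        _ = 0 := this
    have hform2 := key_nonvanish hr hRr hz hn1 h hhdeg hh0 hhroots hα hφα hvalh
    -- derive Q proportional to (X + C z)^n, contradiction
    set γ₁ := h.leadingCoeff with hγ₁
    set γ₂ := (starRingEnd ℂ) γ₁ * ((starRingEnd ℂ) z)^n with hγ₂dummy
    set W := (X + Polynomial.C z)^n with hW
    have hγ₂ : True := trivial
    have eq1 : Q - Polynomial.C μ * pstar n Q = Polynomial.C γ₁ * W := by
      rw [← hh, hform2]
    have eq2 : pstar n Q - Polynomial.C ((starRingEnd ℂ) μ) * Q = Polynomial.C γ₂ * W := by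
      have hstar : pstar n h = pstar n Q - Polynomial.C ((starRingEnd ℂ) μ) * Q := by
        rw [hh, pstar_sub, pstar_C_mul, hQQs]
      rw [← hstar, hform2, pstar_C_mul, pstar_pow_linear n hz, ← mul_assoc, ← Polynomial.C_mul]
    have hμμ : (1 : ℂ) - μ * (starRingEnd ℂ) μ ≠ 0 := by
      rw [Complex.mul_conj]
      intro hcon
      have : ((Complex.normSq μ : ℝ) : ℂ) = 1 := by linear_combination -hcon
      have h2 : Complex.normSq μ = 1 := by exact_mod_cast this
      have h3 : Complex.abs μ ^ 2 = 1 := by rw [Complex.sq_abs, h2]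
      nlinarith
    have hcomb : Q * Polynomial.C (1 - μ * (starRingEnd ℂ) μ)
        = Polynomial.C (γ₁ + μ * γ₂) * W := by
      rw [map_sub, map_add, map_mul, map_mul, map_one]
      linear_combination eq1 + Polynomial.C μ * eq2
    apply hform
    refine ⟨(γ₁ + μ * γ₂) * (1 - μ * (starRingEnd ℂ) μ)⁻¹, ?_⟩
    have hCne : Polynomial.C (1 - μ * (starRingEnd ℂ) μ) ≠ (0 : Polynomial ℂ) :=
      Polynomial.C_ne_zero.mpr hμμ
    apply mul_right_cancel₀ hCne
    rw [hcomb, Polynomial.C_mul]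
    have hid : Polynomial.C ((1 - μ * (starRingEnd ℂ) μ)⁻¹)
        * Polynomial.C (1 - μ * (starRingEnd ℂ) μ) = 1 := by
      rw [← Polynomial.C_mul, inv_mul_cancel₀ hμμ, Polynomial.C_1]
    calc Polynomial.C (γ₁ + μ * γ₂) * W
        = Polynomial.C (γ₁ + μ * γ₂) * (Polynomial.C ((1 - μ * (starRingEnd ℂ) μ)⁻¹)
            * Polynomial.C (1 - μ * (starRingEnd ℂ) μ)) * W := by rw [hid, mul_one]
      _ = Polynomial.C (γ₁ + μ * γ₂) * Polynomial.C ((1 - μ * (starRingEnd ℂ) μ)⁻¹) * W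
            * Polynomial.C (1 - μ * (starRingEnd ℂ) μ) := by ring
lemma minmod (P : Polynomial ℂ)
    (hnz : ∀ z : ℂ, Complex.abs z < 1 → P.eval z ≠ 0)
    (m : ℝ)
    (hm : IsLeast ((fun z : ℂ => Complex.abs (P.eval z)) '' {z : ℂ | Complex.abs z = 1}) m) :
    ∀ w : ℂ, Complex.abs w ≤ 1 → m ≤ Complex.abs (P.eval w) := by
  intro w hw
  rcases eq_or_lt_of_le hw with heq | hlt
  · exact hm.2 ⟨w, heq, rfl⟩
  rcases le_or_gt m 0 with hm0 | hm0
  · exact le_trans hm0 (Complex.abs.nonneg _)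
  have hball : ∀ v ∈ closure (Metric.ball (0:ℂ) 1), P.eval v ≠ 0 := by
    rw [closure_ball (0:ℂ) one_ne_zero]
    intro v hv
    rw [Metric.mem_closedBall, dist_zero_right, Complex.norm_eq_abs] at hv
    rcases eq_or_lt_of_le hv with he | hl
    · intro hcon
      have : m ≤ Complex.abs (P.eval v) := hm.2 ⟨v, he, rfl⟩
      rw [hcon, map_zero] at this
      linarith
    · exact hnz v hl
  have hd : DiffContOnCl ℂ (fun v => (P.eval v)⁻¹) (Metric.ball (0:ℂ) 1) := by
    apply DifferentiableOn.diffContOnCl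
    apply DifferentiableOn.inv
    · exact (Polynomial.differentiable P).differentiableOn
    · exact hball
  have hfr : ∀ v ∈ frontier (Metric.ball (0:ℂ) 1), ‖(P.eval v)⁻¹‖ ≤ m⁻¹ := by
    rw [frontier_ball (0:ℂ) one_ne_zero]
    intro v hv
    rw [mem_sphere_iff_norm, sub_zero, Complex.norm_eq_abs] at hv
    have hmv : m ≤ Complex.abs (P.eval v) := hm.2 ⟨v, hv, rfl⟩
    rw [norm_inv, Complex.norm_eq_abs]
    exact inv_anti₀ hm0 hmv
  have hwball : w ∈ closure (Metric.ball (0:ℂ) 1) := by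
    rw [closure_ball (0:ℂ) one_ne_zero]
    rw [Metric.mem_closedBall, dist_zero_right, Complex.norm_eq_abs]
    exact hw
  have key := Complex.norm_le_of_forall_mem_frontier_norm_le Metric.isBounded_ball hd hfr hwball
  rw [norm_inv, Complex.norm_eq_abs] at key
  have hPw : P.eval w ≠ 0 := hnz w hlt
  have hPwpos : 0 < Complex.abs (P.eval w) := by simpa using hPw
  rw [inv_le_inv₀ (by positivity) hm0] at key
  exact key
set_option maxHeartbeats 2000000 in
theorem stmt_18 (P : Polynomial ℂ) (n : ℕ) (hdeg : P.natDegree = n)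
    (hnz : ∀ z : ℂ, ‖z‖ < 1 → P.eval z ≠ 0)
    (m : ℝ)
    (hm : IsLeast ((fun z : ℂ => ‖P.eval z‖) '' {z : ℂ | ‖z‖ = 1}) m)
    (Pstar : Polynomial ℂ)
    (hPstar : Pstar = Polynomial.reflect n (P.map (starRingEnd ℂ)))
    (R r : ℝ) (hr : 1 ≤ r) (hRr : r < R)
    (α β : ℂ) (hα : ‖α‖ ≤ 1) (hβ : ‖β‖ ≤ 1)
    (φ : ℂ) (hφ : φ = β * ((((R + 1) / (r + 1)) ^ n : ℝ) - ‖α‖) - α) :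
    ∀ z : ℂ, ‖z‖ = 1 →
      ‖P.eval ((R : ℂ) * z) + φ * P.eval ((r : ℂ) * z)‖ ≤
        ‖Pstar.eval ((R : ℂ) * z) + φ * Pstar.eval ((r : ℂ) * z)‖ -
          (‖(R : ℂ) ^ n + φ * (r : ℂ) ^ n‖ - ‖1 + φ‖) * m := by
  replace hnz : ∀ z : ℂ, Complex.abs z < 1 → P.eval z ≠ 0 := hnz
  replace hm : IsLeast ((fun z : ℂ => Complex.abs (P.eval z)) '' {z : ℂ | Complex.abs z = 1}) m := hm
  replace hα : Complex.abs α ≤ 1 := hα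
  replace hβ : Complex.abs β ≤ 1 := hβ
  replace hφ : φ = β * ((((R + 1) / (r + 1)) ^ n : ℝ) - Complex.abs α) - α := hφ
  show ∀ z : ℂ, Complex.abs z = 1 →
      Complex.abs (P.eval ((R : ℂ) * z) + φ * P.eval ((r : ℂ) * z)) ≤
        Complex.abs (Pstar.eval ((R : ℂ) * z) + φ * Pstar.eval ((r : ℂ) * z)) -
          (Complex.abs ((R : ℂ) ^ n + φ * (r : ℂ) ^ n) - Complex.abs (1 + φ)) * m
  intro z hz
  have hPstarP : Pstar = pstar n P := hPstar
  have hR1 : (1:ℝ) < R := lt_of_le_of_lt hr hRr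
  have hr1 : (0:ℝ) < r + 1 := by linarith
  -- basic constants
  set K : ℝ := ((R + 1) / (r + 1)) ^ n with hKdef
  have hK1 : (1:ℝ) ≤ K := by
    apply one_le_pow₀
    rw [le_div_iff₀ hr1]
    linarith
  have hφα : Complex.abs (φ + α) ≤ K - Complex.abs α := by
    have : φ + α = β * (((K:ℝ):ℂ) - ((Complex.abs α : ℝ):ℂ)) := by
      rw [hφ]; ring
    rw [this, map_mul]
    have hcast : (((K:ℝ):ℂ) - ((Complex.abs α : ℝ):ℂ)) = (((K - Complex.abs α : ℝ)):ℂ) := by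
      push_cast; ring
    rw [hcast, Complex.abs_ofReal, _root_.abs_of_nonneg (by linarith : (0:ℝ) ≤ K - Complex.abs α)]
    calc Complex.abs β * (K - Complex.abs α) ≤ 1 * (K - Complex.abs α) :=
        mul_le_mul_of_nonneg_right hβ (by linarith)
      _ = K - Complex.abs α := one_mul _
  have hm0 : 0 ≤ m := by
    obtain ⟨z₀, hz₀, he⟩ := hm.1
    rw [← he]
    exact Complex.abs.nonneg _
  -- case n = 0
  rcases Nat.eq_zero_or_pos n with hn0 | hn1
  · subst hn0
    have hP : P = Polynomial.C (P.coeff 0) := Polynomial.eq_C_of_natDegree_eq_zero hdeg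
    have hPs : Pstar = Polynomial.C ((starRingEnd ℂ) (P.coeff 0)) := by
      rw [hPstar]
      conv_lhs => rw [hP]
      rw [Polynomial.map_C, Polynomial.reflect_C, pow_zero, mul_one]
    rw [hP, hPs]
    simp only [Polynomial.eval_C, pow_zero]
    simp only [mul_one]
    rw [sub_self, zero_mul, sub_zero]
    have e : ∀ ca : ℂ, ca + φ * ca = ca * (1 + φ) := fun ca => by ring
    rw [e, e, map_mul, map_mul, Complex.abs_conj]
  -- main case n ≥ 1
  set A := P.eval ((R:ℂ) * z) + φ * P.eval ((r:ℂ) * z) with hA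
  set B := Pstar.eval ((R:ℂ) * z) + φ * Pstar.eval ((r:ℂ) * z) with hB
  set d := Complex.abs ((R:ℂ)^n + φ * (r:ℂ)^n) with hd
  set c := Complex.abs (1 + φ) with hc
  have hz0 : z ≠ 0 := by
    intro h; rw [h, map_zero] at hz; linarith
  have hn0 : n ≠ 0 := Nat.pos_iff_ne_zero.mp hn1
  have hφK : Complex.abs φ ≤ K := by
    calc Complex.abs φ = Complex.abs ((φ + α) - α) := by ring_nf
      _ ≤ Complex.abs (φ + α) + Complex.abs α := by
          have := Complex.abs.add_le (φ + α) (-α)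
          rw [Complex.abs.map_neg] at this
          calc Complex.abs ((φ + α) - α) = Complex.abs ((φ + α) + (-α)) := by ring_nf
            _ ≤ Complex.abs (φ + α) + Complex.abs α := by
                have h2 := Complex.abs.add_le (φ + α) (-α)
                rw [Complex.abs.map_neg] at h2
                exact h2
      _ ≤ K := by linarith
  have hd0 : 0 < d := by
    have h1 : Complex.abs ((R:ℂ)^n) = R^n := by
      rw [map_pow, Complex.abs_ofReal, abs_of_pos (by linarith : (0:ℝ) < R)]
    have h2 : Complex.abs (φ * (r:ℂ)^n) ≤ K * r^n := by
      rw [map_mul, map_pow, Complex.abs_ofReal, abs_of_pos (by linarith : (0:ℝ) < r)]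
      exact mul_le_mul_of_nonneg_right hφK (by positivity)
    have h3 : K * r^n < R^n := by
      have he : K * r^n = ((R+1)/(r+1)*r)^n := by
        rw [hKdef, mul_pow]
      rw [he]
      have hbase : (0:ℝ) ≤ (R+1)/(r+1)*r :=
        mul_nonneg (div_nonneg (by linarith) (by linarith)) (by linarith)
      apply pow_lt_pow_left₀ _ hbase hn0
      rw [div_mul_eq_mul_div, div_lt_iff₀ hr1]
      nlinarith
    have h4 : R^n - K * r^n ≤ d := by
      have := Complex.abs.le_sub ((R:ℂ)^n + φ * (r:ℂ)^n) (-(φ * (r:ℂ)^n))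
      rw [Complex.abs.map_neg, sub_neg_eq_add] at this
      have he : (R:ℂ)^n + φ * (r:ℂ)^n + φ * (r:ℂ)^n - φ * (r:ℂ)^n = (R:ℂ)^n + φ * (r:ℂ)^n := by ring
      -- simpler direct:
      have h5 := Complex.abs.le_sub ((R:ℂ)^n) (-(φ * (r:ℂ)^n))
      rw [Complex.abs.map_neg, sub_neg_eq_add] at h5
      rw [h1] at h5
      calc R^n - K * r^n ≤ R^n - Complex.abs (φ * (r:ℂ)^n) := by linarith
        _ ≤ Complex.abs ((R:ℂ)^n + φ * (r:ℂ)^n) := h5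
        _ = d := rfl
    linarith
  -- the φ-condition for key_nonvanish / BL
  have hφα' : Complex.abs (φ + α) ≤ ((R+1)/(r+1))^n - Complex.abs α := hφα
  rcases eq_or_lt_of_le hm0 with hmz | hmpos
  · -- m = 0
    rw [← hmz, mul_zero, sub_zero, hA, hB, hPstarP]
    exact BL hr hRr hz hn1 P hdeg hnz hα hφα'
  -- m > 0
  set ζ := ((m:ℝ):ℂ) * z^n * ((R:ℂ)^n + φ * (r:ℂ)^n) with hζ
  have hζabs : Complex.abs ζ = m * d := by
    rw [hζ, map_mul, map_mul, Complex.abs_ofReal, abs_of_pos hmpos, map_pow, hz, one_pow, mul_one]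
  have hζne : ζ ≠ 0 := by
    intro h
    rw [h, map_zero] at hζabs
    nlinarith
  -- S1 : B is never lam * ζ  for |lam| < 1
  have hS1 : ∀ lam : ℂ, Complex.abs lam < 1 → B ≠ lam * ζ := by
    intro lam hlam hBeq
    set P' := P - Polynomial.C ((starRingEnd ℂ) lam * (m:ℝ)) with hP'
    have hP'nz : ∀ v : ℂ, Complex.abs v < 1 → P'.eval v ≠ 0 := by
      intro v hv hcon
      rw [hP', Polynomial.eval_sub, Polynomial.eval_C, sub_eq_zero] at hcon
      have h1 : m ≤ Complex.abs (P.eval v) := minmod P hnz m hm v hv.le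
      rw [hcon, map_mul, Complex.abs_conj, Complex.abs_ofReal, abs_of_pos hmpos] at h1
      nlinarith
    have hP'deg : P'.natDegree = n := by
      rw [hP', Polynomial.natDegree_sub_C, hdeg]
    have hP'c0 : P'.coeff 0 ≠ 0 := by
      rw [Polynomial.coeff_zero_eq_eval_zero]
      exact hP'nz 0 (by simp)
    have hG : pstar n P' = pstar n P - Polynomial.C (lam * (m:ℝ)) * X^n := by
      rw [hP', pstar_sub_C]
      congr 2
      rw [map_mul, Complex.conj_conj, Complex.conj_ofReal]
    have hGdeg : (pstar n P').natDegree = n := natDegree_pstar_eq P' hP'deg hP'c0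
    have hG0 : pstar n P' ≠ 0 := pstar_ne_zero P' hP'c0
    have hGroots := roots_pstar_le P' hP'deg hP'nz
    have hGval : (pstar n P').eval ((R:ℂ)*z) + φ * (pstar n P').eval ((r:ℂ)*z) = 0 := by
      rw [hG]
      simp only [Polynomial.eval_sub, Polynomial.eval_mul, Polynomial.eval_C,
        Polynomial.eval_pow, Polynomial.eval_X]
      have : B = lam * ζ := hBeq
      rw [hB, hPstarP] at this
      rw [hζ] at this
      calc (pstar n P).eval ((R:ℂ)*z) - lam * (m:ℝ) * ((R:ℂ)*z)^n
            + φ * ((pstar n P).eval ((r:ℂ)*z) - lam * (m:ℝ) * ((r:ℂ)*z)^n)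
          = ((pstar n P).eval ((R:ℂ)*z) + φ * (pstar n P).eval ((r:ℂ)*z))
            - lam * (((m:ℝ):ℂ) * z^n * ((R:ℂ)^n + φ * (r:ℂ)^n)) := by ring
        _ = 0 := by rw [← this]; ring
    have hform := key_nonvanish hr hRr hz hn1 (pstar n P') hGdeg hG0 hGroots hα hφα' hGval
    -- P' = pstar of that form, evaluate at -z
    have h2 := congrArg (pstar n) hform
    rw [pstar_pstar n P' hP'deg.le] at h2
    have hPz : P'.eval (-z) = 0 := by
      rw [h2, pstar_C_mul, pstar_pow_linear n hz]
      simp only [Polynomial.eval_mul, Polynomial.eval_C, Polynomial.eval_pow,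
        Polynomial.eval_add, Polynomial.eval_X]
      rw [neg_add_cancel, zero_pow hn0]
      ring
    rw [hP', Polynomial.eval_sub, Polynomial.eval_C, sub_eq_zero] at hPz
    have h1 : m ≤ Complex.abs (P.eval (-z)) := by
      apply hm.2
      refine ⟨-z, ?_, rfl⟩
      rw [Set.mem_setOf_eq, Complex.abs.map_neg, hz]
    rw [hPz, map_mul, Complex.abs_conj, Complex.abs_ofReal, abs_of_pos hmpos] at h1
    nlinarith
  -- |B| ≥ m * d
  have hBge : m * d ≤ Complex.abs B := by
    by_contra hlt
    push_neg at hlt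
    have hlam : Complex.abs (B / ζ) < 1 := by
      rw [map_div₀, hζabs, div_lt_one (by positivity)]
      exact hlt
    exact hS1 (B / ζ) hlam (by rw [div_mul_cancel₀ _ hζne])
  have hBpos : 0 < Complex.abs B := by nlinarith
  have hBne : B ≠ 0 := by
    intro h; rw [h, map_zero] at hBpos; linarith
  -- main estimate for every t ∈ (0,1)
  have hmain : ∀ t : ℝ, 0 < t → t < 1 →
      Complex.abs A ≤ Complex.abs B - t * m * d + t * m * c := by
    intro t ht0 ht1
    set u : ℝ := t * m * d / Complex.abs B with hu
    have hu0 : 0 < u := by positivity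
    have hu1 : u < 1 := by
      rw [hu, div_lt_one hBpos]
      nlinarith
    set lam := (starRingEnd ℂ) (((u:ℝ):ℂ) * B / ζ) with hlam
    have hconj : (starRingEnd ℂ) lam * ζ = ((u:ℝ):ℂ) * B := by
      rw [hlam, Complex.conj_conj, div_mul_cancel₀ _ hζne]
    have hlamabs : Complex.abs lam = t := by
      rw [hlam, Complex.abs_conj, map_div₀, map_mul, Complex.abs_ofReal,
        abs_of_pos hu0, hζabs]
      rw [hu]
      field_simp
    have hlam1 : Complex.abs lam < 1 := by rw [hlamabs]; exact ht1
    -- apply BL to P - C (lam * m)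
    set Q := P - Polynomial.C (lam * (m:ℝ)) with hQ
    have hQnz : ∀ v : ℂ, Complex.abs v < 1 → Q.eval v ≠ 0 := by
      intro v hv hcon
      rw [hQ, Polynomial.eval_sub, Polynomial.eval_C, sub_eq_zero] at hcon
      have h1 : m ≤ Complex.abs (P.eval v) := minmod P hnz m hm v hv.le
      rw [hcon, map_mul, Complex.abs_ofReal, abs_of_pos hmpos, hlamabs] at h1
      nlinarith
    have hQdeg : Q.natDegree = n := by rw [hQ, Polynomial.natDegree_sub_C, hdeg]
    have hbl := BL hr hRr hz hn1 Q hQdeg hQnz hα hφα'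
    have hQs : pstar n Q = pstar n P - Polynomial.C ((starRingEnd ℂ) lam * (m:ℝ)) * X^n := by
      rw [hQ, pstar_sub_C]
      congr 2
      rw [map_mul, Complex.conj_ofReal]
    -- compute both sides of BL
    have hAt : Q.eval ((R:ℂ)*z) + φ * Q.eval ((r:ℂ)*z) = A - lam * (m:ℝ) * (1 + φ) := by
      rw [hQ]
      simp only [Polynomial.eval_sub, Polynomial.eval_C]
      rw [hA]; ring
    have hBt : (pstar n Q).eval ((R:ℂ)*z) + φ * (pstar n Q).eval ((r:ℂ)*z)
        = B - ((u:ℝ):ℂ) * B := by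
      rw [hQs]
      simp only [Polynomial.eval_sub, Polynomial.eval_mul, Polynomial.eval_C,
        Polynomial.eval_pow, Polynomial.eval_X]
      have : ((starRingEnd ℂ) lam * (m:ℝ)) * ((R:ℂ)*z)^n
            + φ * (((starRingEnd ℂ) lam * (m:ℝ)) * ((r:ℂ)*z)^n)
          = (starRingEnd ℂ) lam * ζ := by
        rw [hζ]; ring
      calc (pstar n P).eval ((R:ℂ)*z) - (starRingEnd ℂ) lam * (m:ℝ) * ((R:ℂ)*z)^n
            + φ * ((pstar n P).eval ((r:ℂ)*z) - (starRingEnd ℂ) lam * (m:ℝ) * ((r:ℂ)*z)^n)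
          = ((pstar n P).eval ((R:ℂ)*z) + φ * (pstar n P).eval ((r:ℂ)*z))
            - ((starRingEnd ℂ) lam * (m:ℝ)) * ((R:ℂ)*z)^n
            - φ * (((starRingEnd ℂ) lam * (m:ℝ)) * ((r:ℂ)*z)^n) := by ring
        _ = ((pstar n P).eval ((R:ℂ)*z) + φ * (pstar n P).eval ((r:ℂ)*z))
            - (starRingEnd ℂ) lam * ζ := by rw [← this]; ring
        _ = ((pstar n P).eval ((R:ℂ)*z) + φ * (pstar n P).eval ((r:ℂ)*z)) - ((u:ℝ):ℂ) * B := by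
            rw [hconj]
        _ = B - ((u:ℝ):ℂ) * B := by rw [← hPstarP, ← hB]
    rw [hAt, hBt] at hbl
    have hBtabs : Complex.abs (B - ((u:ℝ):ℂ) * B) = Complex.abs B - t * m * d := by
      have huB : u * Complex.abs B = t * m * d := by
        rw [hu, div_mul_cancel₀ _ hBpos.ne']
      have he2 : B - ((u:ℝ):ℂ) * B = ((1 - u : ℝ):ℂ) * B := by push_cast; ring
      rw [he2, map_mul, Complex.abs_ofReal,
        _root_.abs_of_pos (by linarith : (0:ℝ) < 1 - u)]
      linarith [huB]
    rw [hBtabs] at hbl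
    have htri : Complex.abs A - t * m * c ≤ Complex.abs (A - lam * (m:ℝ) * (1 + φ)) := by
      have h5 := Complex.abs.le_sub A (lam * (m:ℝ) * (1 + φ))
      have habs : Complex.abs (lam * (m:ℝ) * (1 + φ)) = t * m * c := by
        rw [map_mul, map_mul, hlamabs, Complex.abs_ofReal, abs_of_pos hmpos, hc]
      linarith
    linarith
  -- conclude by limiting argument
  by_contra hcon
  push_neg at hcon
  set ε := Complex.abs A - (Complex.abs B - (d - c) * m) with hε
  have hε0 : 0 < ε := by rw [hε]; linarith
  have hc0 : 0 ≤ c := Complex.abs.nonneg _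
  set t : ℝ := max (1/2) (1 - ε / (m * (c + d) + 1)) with ht
  have ht0 : 0 < t := lt_of_lt_of_le (by norm_num) (le_max_left _ _)
  have ht1 : t < 1 := by
    rw [ht]
    apply max_lt (by norm_num)
    have : 0 < ε / (m * (c + d) + 1) := by positivity
    linarith
  have h6 := hmain t ht0 ht1
  have h7 : 1 - t ≤ ε / (m * (c + d) + 1) := by
    rw [ht]
    have := le_max_right (1/2 : ℝ) (1 - ε / (m * (c + d) + 1))
    linarith
  have h8 : (1 - t) * (m * (c + d)) < ε := by
    have h9 : 0 < m * (c + d) + 1 := by positivity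
    calc (1 - t) * (m * (c + d)) ≤ (ε / (m * (c + d) + 1)) * (m * (c + d)) := by
          apply mul_le_mul_of_nonneg_right h7 (by positivity)
      _ < (ε / (m * (c + d) + 1)) * (m * (c + d) + 1) := by
          apply mul_lt_mul_of_pos_left (by linarith) (by positivity)
      _ = ε := by field_simp
  have h9 : Complex.abs A ≤ Complex.abs B - m*d + m*c + (1-t)*(m*(c+d)) := by
    nlinarith [h6, mul_nonneg (mul_nonneg (by linarith : (0:ℝ) ≤ 1 - t) hm0) hc0]
  rw [hε] at h8 hε0
  linarith [h9, h8, hε0]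
end
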